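/- arXiv:2003.06283 — 8 statements merged into one kernel-verified Lean document; each statement's English description precedes it below -/
import Mathlib

section
/- For every k ∈ ℕ and every x ∈ ℝ, the derivative of the shifted Legendre polynomial expands as d𝓛_k/dx (x) = Σ_{j=0}^{k} ℓ_{kj} 𝓛_j(x), where ℓ_{kj} = (2j+1)(1 − (−1)^{k+j}). -/
open Finset

/-- The shifted Legendre polynomial on `[0,1]`:
`𝓛_k(x) = (−1)^k ∑_{l=0}^{k} (−1)^l (k choose l) ((k+l) choose l) x^l`. -/
noncomputable def shiftedLegendre (k : ℕ) (x : ℝ) : ℝ :=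
  (-1 : ℝ) ^ k *
    ∑ l ∈ range (k + 1),
      (-1 : ℝ) ^ l * (k.choose l) * ((k + l).choose l) * x ^ l

/-- The coefficients `ℓ_{kj} = (2j+1)(1 − (−1)^{k+j})` for `j ≤ k`,
and `ℓ_{kj} = 0` for `j > k`. -/
noncomputable def legendreCoeff (k j : ℕ) : ℝ :=
  if j ≤ k then (2 * (j : ℝ) + 1) * (1 - (-1 : ℝ) ^ (k + j)) else 0


lemma hF1 (k m : ℕ) : ((m:ℝ)+1) * ((k+m+1).choose (m+1)) = ((k:ℝ)+1) * ((k+m+1).choose m) := by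
  have h := Nat.choose_succ_right_eq (k+m+1) m
  have h2 : k+m+1 - m = k+1 := by omega
  rw [h2] at h
  have hN : (m+1) * ((k+m+1).choose (m+1)) = (k+1) * ((k+m+1).choose m) := by
    rw [mul_comm, h, mul_comm]
  exact_mod_cast hN

lemma hF2 (k m : ℕ) : ((m:ℝ)+1) * ((k+1).choose (m+1)) + (m:ℝ) * ((k+1).choose m) = ((k:ℝ)+1) * ((k+1).choose m) := by
  have h := Nat.choose_succ_right_eq (k+1) m
  rcases le_or_gt m (k+1) with hm | hm
  · have h2 : ((k+1:ℕ) - m : ℕ) = ((k:ℝ)+1) - m := by push_cast [hm]; ring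
    have := congrArg (fun n : ℕ => (n:ℝ)) h
    push_cast at this
    rw [h2] at this
    linarith [this]
  · have h1 : (k+1).choose m = 0 := Nat.choose_eq_zero_of_lt hm
    have h2 : (k+1).choose (m+1) = 0 := Nat.choose_eq_zero_of_lt (by omega)
    simp [h1, h2]

lemma hF3 (k m : ℕ) : ((k:ℝ)+1) * (k.choose m) + (m:ℝ) * ((k+1).choose m) = ((k:ℝ)+1) * ((k+1).choose m) := by
  have h := Nat.add_one_mul_choose_eq k m
  have hN : (k+1) * k.choose m = (m+1) * ((k+1).choose (m+1)) := by
    simpa [Nat.succ_eq_add_one, mul_comm] using h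
  have h' : ((k:ℝ)+1) * (k.choose m) = ((m:ℝ)+1) * ((k+1).choose (m+1)) := by exact_mod_cast hN
  rw [h']; exact hF2 k m

lemma sum1 (m k : ℕ) :
    ∑ j ∈ range (k+1), ((2*(j:ℝ)+1) * (j.choose m) * ((j+m).choose m))
      = ((m:ℝ)+1) * ((k+1).choose (m+1)) * ((k+m+1).choose (m+1)) := by
  induction k with
  | zero =>
    simp only [zero_add, Finset.sum_range_one]
    cases m with
    | zero => norm_num
    | succ m' =>
      have h1 : (0:ℕ).choose (m'+1) = 0 := Nat.choose_eq_zero_of_lt (Nat.succ_pos m')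
      have h2 : (1:ℕ).choose (m'+2) = 0 := Nat.choose_eq_zero_of_lt (by omega)
      simp [h1, h2]
  | succ k ih =>
    rw [Finset.sum_range_succ, ih]
    have e : k+1+m = k+m+1 := by ring
    rw [e]
    have p1 : (k+1+1).choose (m+1) = (k+1).choose m + (k+1).choose (m+1) := Nat.choose_succ_succ _ _
    have p2 : (k+m+1+1).choose (m+1) = (k+m+1).choose m + (k+m+1).choose (m+1) := Nat.choose_succ_succ _ _
    rw [p1, p2]
    push_cast
    linear_combination (-(((k+1).choose m : ℝ))) * hF1 k m - (((k+m+1).choose m : ℝ)) * hF2 k m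

lemma sum2 (m k : ℕ) :
    ∑ j ∈ range (k+1), ((-1:ℝ)^j * (2*(j:ℝ)+1) * (j.choose m) * ((j+m).choose m))
      = (-1:ℝ)^k * ((m:ℝ)+1) * (k.choose m) * ((k+m+1).choose (m+1)) := by
  induction k with
  | zero =>
    simp only [zero_add, Finset.sum_range_one]
    cases m with
    | zero => norm_num
    | succ m' =>
      have h1 : (0:ℕ).choose (m'+1) = 0 := Nat.choose_eq_zero_of_lt (Nat.succ_pos m')
      simp [h1]
  | succ k ih =>
    rw [Finset.sum_range_succ, ih]
    have e : k+1+m = k+m+1 := by ring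
    rw [e]
    have p2 : (k+m+1+1).choose (m+1) = (k+m+1).choose m + (k+m+1).choose (m+1) := Nat.choose_succ_succ _ _
    rw [p2, pow_succ]
    push_cast
    linear_combination ((-1:ℝ)^k * ((k.choose m : ℝ) + ((k+1).choose m : ℝ))) * hF1 k m
      + ((-1:ℝ)^k * ((k+m+1).choose m : ℝ)) * hF3 k m

lemma coeffId (k m : ℕ) :
    ∑ j ∈ range (k+1),
        ((2*(j:ℝ)+1) * (1 - (-1:ℝ)^(k+j)) * ((-1:ℝ)^j * (j.choose m) * ((j+m).choose m)))
      = -((-1:ℝ)^k) * ((m:ℝ)+1) * (k.choose (m+1)) * ((k+m+1).choose (m+1)) := by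
  have step : ∀ j ∈ range (k+1),
      (2*(j:ℝ)+1) * (1 - (-1:ℝ)^(k+j)) * ((-1:ℝ)^j * (j.choose m) * ((j+m).choose m))
        = (-1:ℝ)^j * (2*(j:ℝ)+1) * (j.choose m) * ((j+m).choose m)
          - (-1:ℝ)^k * ((2*(j:ℝ)+1) * (j.choose m) * ((j+m).choose m)) := by
    intro j _
    have h2 : (-1:ℝ)^j * (-1:ℝ)^j = 1 := by
      rw [← pow_add, ← two_mul, pow_mul]; norm_num
    rw [pow_add]
    linear_combination (-(-1:ℝ)^k * (2*(j:ℝ)+1) * (j.choose m) * ((j+m).choose m)) * h2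
  rw [Finset.sum_congr rfl step, Finset.sum_sub_distrib, ← Finset.mul_sum, sum1, sum2]
  have p : ((k+1).choose (m+1) : ℝ) = (k.choose m : ℝ) + (k.choose (m+1) : ℝ) := by
    exact_mod_cast congrArg (fun n : ℕ => (n:ℝ)) (Nat.choose_succ_succ k m)
  rw [p]; ring

/-- Derivative expansion of the shifted Legendre polynomial:
`d𝓛_k/dx (x) = ∑_{j=0}^{k} ℓ_{kj} 𝓛_j(x)`. -/
theorem shiftedLegendre_deriv (k : ℕ) (x : ℝ) :
    deriv (shiftedLegendre k) x =
      ∑ j ∈ range (k + 1), legendreCoeff k j * shiftedLegendre j x := by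
  -- derivative computation
  have H : HasDerivAt (shiftedLegendre k)
      ((-1:ℝ)^k * ∑ l ∈ range (k+1),
        (-1:ℝ)^l * (k.choose l) * ((k+l).choose l) * ((l:ℝ) * x^(l-1))) x := by
    unfold shiftedLegendre
    exact HasDerivAt.const_mul _
      (HasDerivAt.fun_sum (fun l _ => (hasDerivAt_pow l x).const_mul _))
  rw [H.deriv]
  -- reshape LHS
  have hL : (-1:ℝ)^k * ∑ l ∈ range (k+1),
        (-1:ℝ)^l * (k.choose l) * ((k+l).choose l) * ((l:ℝ) * x^(l-1))
      = ∑ m ∈ range (k+1),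
          (-1:ℝ)^k * ((-1:ℝ)^(m+1) * (k.choose (m+1)) * ((k+m+1).choose (m+1)) * (((m:ℝ)+1) * x^m)) := by
    rw [Finset.mul_sum, Finset.sum_range_succ' _ k, Finset.sum_range_succ]
    have e1 : ∀ m ∈ range k,
        (-1:ℝ)^k * ((-1:ℝ)^(m+1) * (k.choose (m+1)) * ((k+(m+1)).choose (m+1)) * ((↑(m+1):ℝ) * x^(m+1-1)))
          = (-1:ℝ)^k * ((-1:ℝ)^(m+1) * (k.choose (m+1)) * ((k+m+1).choose (m+1)) * (((m:ℝ)+1) * x^m)) := by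
      intro m _
      have : k+(m+1) = k+m+1 := by ring
      rw [this]
      push_cast
      ring
    rw [Finset.sum_congr rfl e1]
    simp [Nat.choose_succ_self]
  rw [hL]
  -- reshape RHS
  have hR : ∀ j ∈ range (k+1), legendreCoeff k j * shiftedLegendre j x
      = ∑ l ∈ range (k+1),
          (2*(j:ℝ)+1) * (1 - (-1:ℝ)^(k+j)) *
            ((-1:ℝ)^j * (j.choose l) * ((j+l).choose l)) * ((-1:ℝ)^l * x^l) := by
    intro j hj
    rw [Finset.mem_range] at hj
    have hjk : j ≤ k := by omega
    rw [legendreCoeff, if_pos hjk, shiftedLegendre]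
    have hext : ∑ l ∈ range (j+1), (-1:ℝ)^l * (j.choose l) * ((j+l).choose l) * x^l
        = ∑ l ∈ range (k+1), (-1:ℝ)^l * (j.choose l) * ((j+l).choose l) * x^l := by
      refine Finset.sum_subset (by intro l hl; rw [Finset.mem_range] at *; omega) ?_
      intro l hl hnl
      rw [Finset.mem_range] at hl hnl
      have : j < l := by omega
      simp [Nat.choose_eq_zero_of_lt this]
    rw [hext, Finset.mul_sum, Finset.mul_sum]
    refine Finset.sum_congr rfl (fun l _ => ?_)
    ring
  rw [Finset.sum_congr rfl hR, Finset.sum_comm]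
  refine Finset.sum_congr rfl (fun m _ => ?_)
  have hmul : ∑ j ∈ range (k+1),
      (2*(j:ℝ)+1) * (1 - (-1:ℝ)^(k+j)) * ((-1:ℝ)^j * (j.choose m) * ((j+m).choose m)) * ((-1:ℝ)^m * x^m)
    = (∑ j ∈ range (k+1),
        (2*(j:ℝ)+1) * (1 - (-1:ℝ)^(k+j)) * ((-1:ℝ)^j * (j.choose m) * ((j+m).choose m))) * ((-1:ℝ)^m * x^m) := by
    rw [Finset.sum_mul]
  rw [hmul, coeffId, pow_succ]
  ring
end

section
/- Let ρ > 0, l ∈ ℕ, and let z : [0,1] × [0,∞) → ℝ^l be continuously differentiable and satisfy the transport equation z_t(x,t) = −ρ z_x(x,t) for all (x,t) ∈ [0,1] × [0,∞). Define Ω_k(t) = ∫₀¹ z(x,t) 𝓛_k(x) dx. Then for every k ∈ ℕ and every t ≥ 0, Ω_k'(t) = −ρ ( z(1,t) − (−1)^k z(0,t) − Σ_{j=0}^{k} ℓ_{kj} Ω_j(t) ). -/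
open Finset

/-- real-cast choose relation r1 -/
lemma r1 (n k : ℕ) : ((k:ℝ)+1) * (n.choose (k+1) : ℝ) = ((n:ℝ) - k) * (n.choose k : ℝ) := by
  rcases le_or_gt k n with h | h
  · have := Nat.choose_succ_right_eq n k
    have hc : ((n.choose (k+1) * (k+1) : ℕ) : ℝ) = ((n.choose k * (n - k) : ℕ) : ℝ) := by
      exact_mod_cast congrArg (fun m : ℕ => (m : ℝ)) this
    push_cast [Nat.cast_sub h] at hc
    linarith [hc]
  · rw [Nat.choose_eq_zero_of_lt (by omega), Nat.choose_eq_zero_of_lt h]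
    simp

/-- real-cast choose relation r2 -/
lemma r2 (n k : ℕ) : ((k:ℝ)+1) * ((n+1).choose (k+1) : ℝ) = ((n:ℝ)+1) * (n.choose k : ℝ) := by
  have := Nat.add_one_mul_choose_eq n k
  have hc : (((n+1) * n.choose k : ℕ) : ℝ) = (((n+1).choose (k+1) * (k+1) : ℕ) : ℝ) := by
    exact_mod_cast congrArg (fun m : ℕ => (m : ℝ)) this
  push_cast at hc
  linarith [hc]

/-- coefficient of `x^l` in the shifted Legendre polynomial -/
noncomputable def legC (k l : ℕ) : ℝ := (-1)^(k+l) * (k.choose l : ℝ) * ((k+l).choose l : ℝ)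

lemma legC_zero {k l : ℕ} (h : k < l) : legC k l = 0 := by
  unfold legC
  rw [Nat.choose_eq_zero_of_lt h]
  ring

/-- the key recurrence on coefficients, unsigned version -/
lemma legT (k l : ℕ) :
    ((l:ℝ)+1) * (((k+2).choose (l+1) : ℝ) * ((k+l+3).choose (l+1) : ℝ)) =
      ((l:ℝ)+1) * ((k.choose (l+1) : ℝ) * ((k+l+1).choose (l+1) : ℝ)) +
        2*(2*(k:ℝ)+3) * (((k+1).choose l : ℝ) * ((k+1+l).choose l : ℝ)) := by
  have h1 : ((l:ℝ)+1) * (((k+2).choose (l+1) : ℝ)) = ((k:ℝ)+2) * ((k+1).choose l : ℝ) := by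
    have := r2 (k+1) l; push_cast at this ⊢; linarith
  have h2 : ((l:ℝ)+1) * (((k+l+3).choose (l+1) : ℝ)) = ((k:ℝ)+(l:ℝ)+3) * ((k+l+2).choose l : ℝ) := by
    have := r2 (k+l+2) l
    have e : k+l+2+1 = k+l+3 := by omega
    rw [e] at this; push_cast at this ⊢; linarith
  have h3 : ((l:ℝ)+1) * ((k.choose (l+1) : ℝ)) = ((k:ℝ)-(l:ℝ)) * (k.choose l : ℝ) := r1 k l
  have h4 : ((l:ℝ)+1) * (((k+l+1).choose (l+1) : ℝ)) = ((k:ℝ)+(l:ℝ)+1) * ((k+l).choose l : ℝ) := by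
    have := r2 (k+l) l; push_cast at this ⊢; linarith
  have h5 : ((k:ℝ)+1-(l:ℝ)) * (((k+1).choose l : ℝ)) = ((k:ℝ)+1) * (k.choose l : ℝ) := by
    have ha := r1 (k+1) l
    have hb := r2 k l
    push_cast at ha hb ⊢; linarith
  have h6 : ((k:ℝ)+2) * (((k+l+2).choose l : ℝ)) = ((k:ℝ)+(l:ℝ)+2) * ((k+l+1).choose l : ℝ) := by
    have ha := r1 (k+l+2) l
    have hb := r2 (k+l+1) l
    have e : k+l+1+1 = k+l+2 := by omega
    rw [e] at hb; push_cast at ha hb ⊢; linarith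
  have h7 : ((k:ℝ)+1) * (((k+l+1).choose l : ℝ)) = ((k:ℝ)+(l:ℝ)+1) * ((k+l).choose l : ℝ) := by
    have ha := r1 (k+l+1) l
    have hb := r2 (k+l) l
    push_cast at ha hb ⊢; linarith
  have e2 : k+1+l = k+l+1 := by omega
  rw [e2]
  have hX : (((l:ℝ)+1) * (((k:ℝ)+1) * ((k:ℝ)+(l:ℝ)+1))) ≠ 0 := by positivity
  apply mul_left_cancel₀ hX
  set A1 := (((k+2).choose (l+1) : ℕ) : ℝ)
  set A2 := (((k+l+3).choose (l+1) : ℕ) : ℝ)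
  set A3 := ((k.choose (l+1) : ℕ) : ℝ)
  set A4 := (((k+l+1).choose (l+1) : ℕ) : ℝ)
  set B1 := (((k+1).choose l : ℕ) : ℝ)
  set B2 := (((k+l+2).choose l : ℕ) : ℝ)
  set B3 := (((k+l+1).choose l : ℕ) : ℝ)
  set a := ((k.choose l : ℕ) : ℝ)
  set b := (((k+l).choose l : ℕ) : ℝ)
  set K := (k:ℝ)
  set L := (l:ℝ)
  linear_combination ((K+1)*(K+L+1)*(L+1)*A2)*h1 + ((K+1)*(K+L+1)*(K+2)*B1)*h2 +
    ((K+1)*(K+L+1)*(K+L+3)*B1)*h6 - ((K+1)*(K+L+1)*(L+1)*A4)*h3 -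
    ((K+1)*(K+L+1)*(K-L)*a)*h4 + ((K-L)*(K+L+1)*(K+1)*B3)*h5 + ((K-L)*(K+L+1)*(K+1)*a)*h7

/-- identity A: per-coefficient recurrence for derivatives -/
lemma legA (k l : ℕ) :
    ((l:ℝ)+1) * legC (k+2) (l+1) =
      ((l:ℝ)+1) * legC k (l+1) + 2*(2*(k:ℝ)+3) * legC (k+1) l := by
  unfold legC
  have e1 : k+2+(l+1) = k+l+3 := by omega
  have e2 : k+(l+1) = k+l+1 := by omega
  rw [e1, e2]
  have hT := legT k l
  have hs1 : ((-1:ℝ))^(k+l+3) = (-1)^(k+l+1) := by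
    have : k+l+3 = (k+l+1)+2 := by omega
    rw [this, pow_add]; ring
  have hs3 : ((-1:ℝ))^(k+1+l) = (-1)^(k+l+1) := by
    have : k+1+l = (k+l+1) := by omega
    rw [this]
  rw [hs1, hs3]
  have e3 : k+1+l = k+l+1 := by omega
  rw [e3] at hT ⊢
  linear_combination ((-1:ℝ)^(k+l+1)) * hT

/-- identity B: per-coefficient ODE relation -/
lemma legB (k m : ℕ) :
    ((m:ℝ)+1)^2 * legC k (m+1) = ((m:ℝ)*((m:ℝ)+1) - (k:ℝ)*((k:ℝ)+1)) * legC k m := by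
  unfold legC
  have e2 : k+(m+1) = k+m+1 := by omega
  rw [e2]
  have h3 : ((m:ℝ)+1) * ((k.choose (m+1) : ℕ) : ℝ) = ((k:ℝ)-(m:ℝ)) * (k.choose m : ℝ) := r1 k m
  have h4 : ((m:ℝ)+1) * (((k+m+1).choose (m+1) : ℕ) : ℝ)
      = ((k:ℝ)+(m:ℝ)+1) * ((k+m).choose m : ℝ) := by
    have := r2 (k+m) m; push_cast at this ⊢; linarith
  have hs : ((-1:ℝ))^(k+m+1) = -((-1:ℝ))^(k+m) := by rw [pow_succ]; ring
  rw [hs]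
  linear_combination (-((-1:ℝ)^(k+m)) * (((m:ℝ)+1) * (((k+m+1).choose (m+1) : ℕ) : ℝ))) * h3 +
    (-((-1:ℝ)^(k+m)) * (((k:ℝ)-(m:ℝ)) * ((k.choose m : ℕ) : ℝ))) * h4

lemma shiftedLegendre_eq_sum (k : ℕ) (x : ℝ) :
    shiftedLegendre k x = ∑ l ∈ range (k+1), legC k l * x ^ l := by
  unfold shiftedLegendre legC
  rw [mul_sum]
  exact sum_congr rfl fun l _ => by rw [pow_add]; ring

noncomputable def legD (k : ℕ) (x : ℝ) : ℝ :=
  ∑ l ∈ range (k+1), ((l:ℝ)+1) * legC k (l+1) * x ^ l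

lemma hasDerivAt_L (k : ℕ) (x : ℝ) :
    HasDerivAt (shiftedLegendre k) (legD k x) x := by
  have h : HasDerivAt (fun y => ∑ l ∈ range (k+1), legC k l * y ^ l)
      (∑ l ∈ range (k+1), legC k l * ((l:ℕ) * x ^ (l-1))) x := by
    apply HasDerivAt.fun_sum
    intro l _
    exact (hasDerivAt_pow l x).const_mul (legC k l)
  have he : (fun y => ∑ l ∈ range (k+1), legC k l * y ^ l) = shiftedLegendre k := by
    funext y; rw [shiftedLegendre_eq_sum]
  rw [he] at h
  convert h using 1
  unfold legD
  rw [Finset.sum_range_succ' (fun l => legC k l * ((l:ℕ) * x ^ (l-1))) k]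
  rw [Finset.sum_range_succ (fun l => ((l:ℝ)+1) * legC k (l+1) * x ^ l) k]
  rw [legC_zero (by omega : k < k+1)]
  simp only [Nat.cast_zero, Nat.add_sub_cancel, Nat.cast_add, Nat.cast_one, zero_mul, mul_zero,
    add_zero, pow_zero]
  exact sum_congr rfl fun l _ => by push_cast; ring

lemma legD_rec (k : ℕ) (x : ℝ) :
    legD (k+2) x = legD k x + 2*(2*(k:ℝ)+3) * shiftedLegendre (k+1) x := by
  unfold legD
  have h1 : ∑ l ∈ range (k+2+1), ((l:ℝ)+1) * legC (k+2) (l+1) * x ^ l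
      = ∑ l ∈ range (k+3), (((l:ℝ)+1) * legC k (l+1) * x ^ l
          + 2*(2*(k:ℝ)+3) * (legC (k+1) l * x ^ l)) := by
    apply sum_congr rfl
    intro l _
    linear_combination (x^l) * (legA k l)
  rw [h1, Finset.sum_add_distrib]
  congr 1
  · rw [Finset.sum_range_succ, Finset.sum_range_succ _ (k+1),
      legC_zero (by omega : k < k+1+1), legC_zero (by omega : k < k+2+1)]
    ring
  · rw [← mul_sum, shiftedLegendre_eq_sum]
    rw [Finset.sum_range_succ (fun l => legC (k+1) l * x ^ l) (k+2),
      legC_zero (by omega : k+1 < k+2)]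
    ring

lemma continuous_L (k : ℕ) : Continuous (shiftedLegendre k) := by
  unfold shiftedLegendre
  exact continuous_const.mul (continuous_finset_sum _ fun l _ =>
    continuous_const.mul (continuous_pow l))

lemma continuous_legD (k : ℕ) : Continuous (legD k) := by
  unfold legD
  exact continuous_finset_sum _ fun l _ => continuous_const.mul (continuous_pow l)

lemma legD_eq (k : ℕ) (x : ℝ) :
    legD k x = ∑ j ∈ range (k+1), legendreCoeff k j * shiftedLegendre j x := by
  induction k using Nat.twoStepInduction generalizing x with
  | zero =>
    simp only [legD, legC, legendreCoeff, shiftedLegendre]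
    norm_num
  | one =>
    simp only [legD, legC, legendreCoeff, shiftedLegendre, Finset.sum_range_succ]
    norm_num
  | more k ih _ =>
    rw [legD_rec, ih]
    rw [Finset.sum_range_succ (fun j => legendreCoeff (k+2) j * shiftedLegendre j x) (k+2),
      Finset.sum_range_succ (fun j => legendreCoeff (k+2) j * shiftedLegendre j x) (k+1)]
    have hc1 : legendreCoeff (k+2) (k+2) = 0 := by
      unfold legendreCoeff
      rw [if_pos le_rfl]
      have : ((-1:ℝ))^(k+2+(k+2)) = 1 := by
        have : k+2+(k+2) = 2*(k+2) := by omega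
        rw [this, pow_mul]; norm_num
      rw [this]; ring
    have hc2 : legendreCoeff (k+2) (k+1) = 2*(2*(k:ℝ)+3) := by
      unfold legendreCoeff
      rw [if_pos (by omega)]
      have : ((-1:ℝ))^(k+2+(k+1)) = -1 := by
        have : k+2+(k+1) = 2*(k+1)+1 := by omega
        rw [this, pow_succ, pow_mul]; norm_num
      rw [this]; push_cast; ring
    have hc3 : ∀ j ∈ range (k+1), legendreCoeff (k+2) j * shiftedLegendre j x
        = legendreCoeff k j * shiftedLegendre j x := by
      intro j hj
      simp only [mem_range] at hj
      unfold legendreCoeff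
      rw [if_pos (by omega), if_pos (by omega)]
      have : ((-1:ℝ))^(k+2+j) = (-1)^(k+j) := by
        have : k+2+j = (k+j)+2 := by omega
        rw [this, pow_add]; norm_num
      rw [this]
    rw [Finset.sum_congr rfl hc3, hc1, hc2]
    ring

lemma hasDerivAt_L' (k : ℕ) (x : ℝ) :
    HasDerivAt (shiftedLegendre k)
      (∑ j ∈ range (k+1), legendreCoeff k j * shiftedLegendre j x) x := by
  rw [← legD_eq]; exact hasDerivAt_L k x

lemma L_zero (k : ℕ) : shiftedLegendre k 0 = (-1:ℝ)^k := by
  rw [shiftedLegendre_eq_sum]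
  rw [Finset.sum_eq_single 0]
  · simp [legC]
  · intro l _ hl
    rw [zero_pow hl, mul_zero]
  · intro h; simp at h

noncomputable def legG (k : ℕ) (x : ℝ) : ℝ :=
  ∑ l ∈ range (k+1), ((l:ℝ)+1) * legC k (l+1) * (x^(l+2) - x^(l+1))

lemma hasDerivAt_legG (k : ℕ) (x : ℝ) :
    HasDerivAt (legG k) ((k:ℝ)*((k:ℝ)+1) * shiftedLegendre k x) x := by
  have h : HasDerivAt (legG k)
      (∑ l ∈ range (k+1), ((l:ℝ)+1) * legC k (l+1) *
        (((l:ℝ)+2)*x^(l+1) - ((l:ℝ)+1)*x^l)) x := by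
    apply HasDerivAt.fun_sum
    intro l _
    have h1 : HasDerivAt (fun y : ℝ => y^(l+2) - y^(l+1))
        (((l:ℝ)+2)*x^(l+1) - ((l:ℝ)+1)*x^l) x := by
      have := (hasDerivAt_pow (l+2) x).fun_sub (hasDerivAt_pow (l+1) x)
      simpa using this
    exact h1.const_mul _
  convert h using 1
  rw [shiftedLegendre_eq_sum, mul_sum]
  have split : ∀ l : ℕ, ((l:ℝ)+1) * legC k (l+1) * (((l:ℝ)+2)*x^(l+1) - ((l:ℝ)+1)*x^l)
      = ((l:ℝ)+1)*((l:ℝ)+2) * legC k (l+1) * x^(l+1) - ((l:ℝ)+1)^2 * legC k (l+1) * x^l := by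
    intro l; ring
  rw [Finset.sum_congr rfl (fun l _ => split l), Finset.sum_sub_distrib]
  have e1 : ∑ l ∈ range (k+1), ((l:ℝ)+1)*((l:ℝ)+2) * legC k (l+1) * x^(l+1)
      = ∑ m ∈ range (k+1), (m:ℝ)*((m:ℝ)+1) * legC k m * x^m := by
    have h0 := Finset.sum_range_succ' (fun m => (m:ℝ)*((m:ℝ)+1) * legC k m * x^m) (k+1)
    have h1 := Finset.sum_range_succ (fun m => (m:ℝ)*((m:ℝ)+1) * legC k m * x^m) (k+1)
    have hterm : ∀ i ∈ range (k+1), ((i:ℝ)+1)*((i:ℝ)+2) * legC k (i+1) * x^(i+1)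
        = (((i+1:ℕ)):ℝ)*((((i+1:ℕ)):ℝ)+1) * legC k (i+1) * x^(i+1) := by
      intro i _; push_cast; ring
    rw [Finset.sum_congr rfl hterm]
    rw [legC_zero (by omega : k < k+1)] at h1
    simp only [Nat.cast_zero, zero_mul, mul_zero, zero_add, add_zero] at h0 h1
    rw [← h0, h1]
  rw [e1, ← Finset.sum_sub_distrib]
  exact sum_congr rfl fun m _ => by linear_combination (x^m) * legB k m

lemma legG_boundary (k : ℕ) : legG k 1 = 0 ∧ legG k 0 = 0 := by
  constructor <;> · unfold legG; apply Finset.sum_eq_zero; intro l _; norm_num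

lemma integral_L (k : ℕ) (hk : k ≠ 0) :
    ∫ x in (0:ℝ)..1, shiftedLegendre k x = 0 := by
  have hFTC := intervalIntegral.integral_eq_sub_of_hasDerivAt
    (f := legG k) (f' := fun x => (k:ℝ)*((k:ℝ)+1) * shiftedLegendre k x)
    (a := 0) (b := 1)
    (fun x _ => hasDerivAt_legG k x)
    ((continuous_const.mul (continuous_L k)).intervalIntegrable 0 1)
  rw [(legG_boundary k).1, (legG_boundary k).2, sub_zero] at hFTC
  rw [intervalIntegral.integral_const_mul] at hFTC
  have hknz : (k:ℝ)*((k:ℝ)+1) ≠ 0 := by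
    have : (1:ℝ) ≤ (k:ℝ) := by exact_mod_cast Nat.one_le_iff_ne_zero.mpr hk
    positivity
  exact (mul_eq_zero.mp hFTC).resolve_left hknz

lemma integral_L0 : ∫ x in (0:ℝ)..1, shiftedLegendre 0 x = 1 := by
  have h : ∀ x : ℝ, shiftedLegendre 0 x = 1 := by
    intro x; unfold shiftedLegendre; norm_num
  simp [h]

lemma L_one (k : ℕ) : shiftedLegendre k 1 = 1 := by
  have hFTC := intervalIntegral.integral_eq_sub_of_hasDerivAt
    (f := shiftedLegendre k) (f' := legD k) (a := 0) (b := 1)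
    (fun x _ => hasDerivAt_L k x)
    ((continuous_legD k).intervalIntegrable 0 1)
  have hint : ∫ x in (0:ℝ)..1, legD k x = 1 - (-1:ℝ)^k := by
    have he : ∀ x : ℝ, legD k x = ∑ j ∈ range (k+1), legendreCoeff k j * shiftedLegendre j x :=
      legD_eq k
    rw [intervalIntegral.integral_congr (fun x _ => he x)]
    rw [intervalIntegral.integral_finset_sum
      (f := fun j x => legendreCoeff k j * shiftedLegendre j x) (fun j _ =>
      ((continuous_const.mul (continuous_L j)).intervalIntegrable 0 1))]
    have hterm : ∀ j ∈ range (k+1),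
        (∫ x in (0:ℝ)..1, legendreCoeff k j * shiftedLegendre j x)
          = if j = 0 then 1 - (-1:ℝ)^k else 0 := by
      intro j hj
      rw [intervalIntegral.integral_const_mul]
      rcases eq_or_ne j 0 with rfl | hj0
      · rw [integral_L0, if_pos rfl]
        unfold legendreCoeff
        rw [if_pos (Nat.zero_le k)]
        norm_num
      · rw [integral_L j hj0, if_neg hj0, mul_zero]
    rw [Finset.sum_congr rfl hterm, Finset.sum_ite_eq' (range (k+1)) 0
      (fun _ => 1 - (-1:ℝ)^k)]
    rw [if_pos (mem_range.mpr (by omega))]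
  rw [hint, L_zero] at hFTC
  linarith [hFTC]

/-- Dynamics of the Legendre projection coefficients of a solution of the
transport equation `z_t = −ρ z_x` on `[0,1] × [0,∞)`:
`Ω_k'(t) = −ρ ( z(1,t) − (−1)^k z(0,t) − ∑_{j=0}^{k} ℓ_{kj} Ω_j(t) )`. -/
theorem projection_dynamics_transport
    (ρ : ℝ) (hρ : 0 < ρ) (l : ℕ)
    (z : ℝ × ℝ → Fin l → ℝ)
    (hz : ContDiff ℝ 1 z)
    (hpde : ∀ x ∈ Set.Icc (0:ℝ) 1, ∀ t ≥ (0:ℝ),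
      deriv (fun s => z (x, s)) t = -ρ • deriv (fun y => z (y, t)) x)
    (Ω : ℕ → ℝ → Fin l → ℝ)
    (hΩ : ∀ k t i, Ω k t i = ∫ x in (0:ℝ)..1, z (x, t) i * shiftedLegendre k x) :
    ∀ k : ℕ, ∀ t ≥ (0:ℝ),
      HasDerivAt (Ω k)
        (-ρ • (z (1, t) - (-1 : ℝ) ^ k • z (0, t) -
          ∑ j ∈ range (k + 1), legendreCoeff k j • Ω j t)) t := by
  intro k t ht
  set zt : ℝ × ℝ → Fin l → ℝ := fun p => fderiv ℝ z p (0, 1) with hzt_def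
  set zx : ℝ × ℝ → Fin l → ℝ := fun p => fderiv ℝ z p (1, 0) with hzx_def
  have hzdiff : Differentiable ℝ z := hz.differentiable one_ne_zero
  have hfc : Continuous (fderiv ℝ z) := hz.continuous_fderiv one_ne_zero
  have hzt_cont : Continuous zt := hfc.clm_apply continuous_const
  have hzx_cont : Continuous zx := hfc.clm_apply continuous_const
  have ht_deriv : ∀ x s : ℝ, HasDerivAt (fun s' => z (x, s')) (zt (x, s)) s := by
    intro x s
    have hg : HasDerivAt (fun s' : ℝ => ((x, s') : ℝ × ℝ)) (((0 : ℝ), (1 : ℝ)) : ℝ × ℝ) s :=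
      (hasDerivAt_const s x).prodMk (hasDerivAt_id s)
    exact (hzdiff (x, s)).hasFDerivAt.comp_hasDerivAt s hg
  have hx_deriv : ∀ x s : ℝ, HasDerivAt (fun y => z (y, s)) (zx (x, s)) x := by
    intro x s
    have hg : HasDerivAt (fun y : ℝ => ((y, s) : ℝ × ℝ)) (((1 : ℝ), (0 : ℝ)) : ℝ × ℝ) x :=
      (hasDerivAt_id x).prodMk (hasDerivAt_const x s)
    exact (hzdiff (x, s)).hasFDerivAt.comp_hasDerivAt x hg
  have hpde' : ∀ x ∈ Set.Icc (0:ℝ) 1, ∀ i : Fin l, zt (x, t) i = -ρ * zx (x, t) i := by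
    intro x hx i
    have h1 := (ht_deriv x t).deriv
    have h2 := (hx_deriv x t).deriv
    have h3 := hpde x hx t ht
    rw [h1, h2] at h3
    have := congrFun h3 i
    simpa [Pi.smul_apply, smul_eq_mul] using this
  apply hasDerivAt_pi.mpr
  intro i
  have hfun : (fun s => Ω k s i) = fun s => ∫ x in (0:ℝ)..1, z (x, s) i * shiftedLegendre k x :=
    funext fun s => hΩ k s i
  have hRHSi : (-ρ • (z (1, t) - (-1 : ℝ) ^ k • z (0, t) -
      ∑ j ∈ range (k + 1), legendreCoeff k j • Ω j t)) i
      = -ρ * (z (1, t) i - (-1 : ℝ) ^ k * z (0, t) i -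
          ∑ j ∈ range (k + 1), legendreCoeff k j * Ω j t i) := by
    simp [Finset.sum_apply]
  rw [hfun, hRHSi]
  -- continuity facts
  have hcont_zs : ∀ s : ℝ, Continuous (fun x => z (x, s) i * shiftedLegendre k x) := fun s =>
    ((continuous_apply i).comp (hz.continuous.comp
      (continuous_id.prodMk continuous_const))).mul (continuous_L k)
  have hcont_zxt : Continuous (fun x => zx (x, t) i * shiftedLegendre k x) :=
    ((continuous_apply i).comp (hzx_cont.comp
      (continuous_id.prodMk continuous_const))).mul (continuous_L k)
  have hcont_ztt : Continuous (fun x => zt (x, t) i * shiftedLegendre k x) :=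
    ((continuous_apply i).comp (hzt_cont.comp
      (continuous_id.prodMk continuous_const))).mul (continuous_L k)
  -- bound on a compact set
  have hKc : IsCompact ((Set.Icc (0:ℝ) 1) ×ˢ (Set.Icc (t-1) (t+1))) :=
    isCompact_Icc.prod isCompact_Icc
  have hbc : Continuous (fun p : ℝ × ℝ => zt p i * shiftedLegendre k p.1) :=
    ((continuous_apply i).comp hzt_cont).mul ((continuous_L k).comp continuous_fst)
  obtain ⟨C, hC⟩ := hKc.exists_bound_of_continuousOn hbc.continuousOn
  -- differentiation under the integral sign
  have K1 := intervalIntegral.hasDerivAt_integral_of_dominated_loc_of_deriv_le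
    (F := fun s x => z (x, s) i * shiftedLegendre k x)
    (F' := fun s x => zt (x, s) i * shiftedLegendre k x)
    (x₀ := t) (a := 0) (b := 1) (μ := MeasureTheory.volume)
    (bound := fun _ => C) (s := Metric.ball t 1) (Metric.ball_mem_nhds t one_pos)
    (Filter.Eventually.of_forall fun s => (hcont_zs s).aestronglyMeasurable)
    ((hcont_zs t).intervalIntegrable 0 1)
    hcont_ztt.aestronglyMeasurable
    (MeasureTheory.ae_of_all _ (by
      intro x hx s hs
      rw [Set.uIoc_of_le (by norm_num : (0:ℝ) ≤ 1)] at hx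
      have hxIcc : x ∈ Set.Icc (0:ℝ) 1 := ⟨le_of_lt hx.1, hx.2⟩
      have hsIcc : s ∈ Set.Icc (t-1) (t+1) := by
        rw [Metric.mem_ball, Real.dist_eq] at hs
        have := abs_lt.mp hs
        constructor <;> linarith [this.1, this.2]
      exact hC (x, s) (Set.mk_mem_prod hxIcc hsIcc)))
    (intervalIntegrable_const)
    (MeasureTheory.ae_of_all _ (by
      intro x _ s _
      exact ((hasDerivAt_pi.mp (ht_deriv x s)) i).mul_const (shiftedLegendre k x)))
  -- identify the value of the derivative
  have hval : (∫ x in (0:ℝ)..1, zt (x, t) i * shiftedLegendre k x)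
      = -ρ * (z (1, t) i - (-1 : ℝ) ^ k * z (0, t) i -
          ∑ j ∈ range (k + 1), legendreCoeff k j * Ω j t i) := by
    have e1 : ∫ x in (0:ℝ)..1, zt (x, t) i * shiftedLegendre k x
        = ∫ x in (0:ℝ)..1, -ρ * (zx (x, t) i * shiftedLegendre k x) := by
      apply intervalIntegral.integral_congr
      intro x hx
      rw [Set.uIcc_of_le (by norm_num : (0:ℝ) ≤ 1)] at hx
      dsimp only
      rw [hpde' x hx i]; ring
    rw [e1, intervalIntegral.integral_const_mul]
    have hparts := intervalIntegral.integral_mul_deriv_eq_deriv_mul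
      (u := fun x => z (x, t) i) (u' := fun x => zx (x, t) i)
      (v := shiftedLegendre k)
      (v' := fun x => ∑ j ∈ range (k+1), legendreCoeff k j * shiftedLegendre j x)
      (a := 0) (b := 1)
      (fun x _ => (hasDerivAt_pi.mp (hx_deriv x t)) i)
      (fun x _ => hasDerivAt_L' k x)
      ((((continuous_apply i).comp (hzx_cont.comp
        (continuous_id.prodMk continuous_const)))).intervalIntegrable 0 1)
      ((continuous_finset_sum _ fun j _ =>
        continuous_const.mul (continuous_L j)).intervalIntegrable 0 1)
    have hsum : (∫ x in (0:ℝ)..1, z (x, t) i *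
        (∑ j ∈ range (k+1), legendreCoeff k j * shiftedLegendre j x))
        = ∑ j ∈ range (k+1), legendreCoeff k j * Ω j t i := by
      have e : ∀ x : ℝ, z (x, t) i * (∑ j ∈ range (k+1), legendreCoeff k j * shiftedLegendre j x)
          = ∑ j ∈ range (k+1), legendreCoeff k j * (z (x, t) i * shiftedLegendre j x) := by
        intro x; rw [Finset.mul_sum]; exact sum_congr rfl fun j _ => by ring
      rw [intervalIntegral.integral_congr (fun x _ => e x)]
      rw [intervalIntegral.integral_finset_sum
        (f := fun j x => legendreCoeff k j * (z (x, t) i * shiftedLegendre j x))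
        (fun j _ => (continuous_const.mul (((continuous_apply i).comp (hz.continuous.comp
          (continuous_id.prodMk continuous_const))).mul (continuous_L j))).intervalIntegrable 0 1)]
      refine sum_congr rfl fun j _ => ?_
      rw [intervalIntegral.integral_const_mul, hΩ j t i]
    rw [hsum] at hparts
    have : (∫ x in (0:ℝ)..1, zx (x, t) i * shiftedLegendre k x)
        = z (1, t) i - (-1 : ℝ) ^ k * z (0, t) i -
          ∑ j ∈ range (k+1), legendreCoeff k j * Ω j t i := by
      rw [L_one, L_zero] at hparts
      linarith [hparts]
    rw [this]
  rw [← hval]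
  exact K1.2
end

section
/- Let ρ > 0, l ∈ ℕ, let S ∈ ℝ^{l×l} be symmetric, and let z : [0,1] × [0,∞) → ℝ^l be continuously differentiable, satisfy the transport equation z_t(x,t) = −ρ z_x(x,t) for all (x,t) ∈ [0,1] × [0,∞), and have zero initial condition z(x,0) = 0 for all x ∈ [0,1]. Then for every T ≥ 0 the energy balance ∫₀¹ z(x,T)ᵀ S z(x,T) dx = ρ ∫₀^T ( z(0,t)ᵀ S z(0,t) − z(1,t)ᵀ S z(1,t) ) dt holds. -/
open Matrix MeasureTheory intervalIntegral


lemma quad_hasDerivAt {l : ℕ} (S : Matrix (Fin l) (Fin l) ℝ)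
    {w : ℝ → Fin l → ℝ} {w' : Fin l → ℝ} {t : ℝ} (h : HasDerivAt w w' t) :
    HasDerivAt (fun s => w s ⬝ᵥ S.mulVec (w s))
      (w' ⬝ᵥ S.mulVec (w t) + w t ⬝ᵥ S.mulVec w') t := by
  have hc : ∀ i, HasDerivAt (fun s => w s i) (w' i) t := hasDerivAt_pi.mp h
  have H : HasDerivAt (fun s => ∑ i, ∑ j, w s i * (S i j * w s j))
      (∑ i, ∑ j, (w' i * (S i j * w t j) + w t i * (S i j * w' j))) t :=
    HasDerivAt.fun_sum fun i _ => HasDerivAt.fun_sum fun j _ =>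
      (hc i).mul ((hc j).const_mul (S i j))
  convert H using 1
  · funext s
    simp [dotProduct, Matrix.mulVec, Finset.mul_sum]
  · simp [dotProduct, Matrix.mulVec, Finset.mul_sum, Finset.sum_add_distrib]

/-- Energy balance for the transport equation: if `z_t = −ρ z_x` on
`[0,1] × [0,∞)` with `z(·,0) = 0` and `S = Sᵀ`, then for every `T ≥ 0`,
`∫₀¹ z(x,T)ᵀ S z(x,T) dx = ρ ∫₀^T ( z(0,t)ᵀ S z(0,t) − z(1,t)ᵀ S z(1,t) ) dt`. -/
theorem transport_energy_balance
    (ρ : ℝ) (hρ : 0 < ρ) (l : ℕ)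
    (S : Matrix (Fin l) (Fin l) ℝ) (hS : S.IsSymm)
    (z : ℝ × ℝ → Fin l → ℝ)
    (hz : ContDiff ℝ 1 z)
    (hpde : ∀ x ∈ Set.Icc (0:ℝ) 1, ∀ t ≥ (0:ℝ),
      deriv (fun s => z (x, s)) t = -ρ • deriv (fun y => z (y, t)) x)
    (hinit : ∀ x ∈ Set.Icc (0:ℝ) 1, z (x, 0) = 0) :
    ∀ T ≥ (0:ℝ),
      ∫ x in (0:ℝ)..1, z (x, T) ⬝ᵥ S.mulVec (z (x, T)) =
        ρ * ∫ t in (0:ℝ)..T,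
          (z (0, t) ⬝ᵥ S.mulVec (z (0, t)) - z (1, t) ⬝ᵥ S.mulVec (z (1, t))) := by
  intro T hT
  set q : ℝ × ℝ → ℝ := fun p => z p ⬝ᵥ S.mulVec (z p) with hqdef
  have hz' : Differentiable ℝ z := hz.differentiable one_ne_zero
  -- q is C¹
  have hq : ContDiff ℝ 1 q := by
    have : q = fun p => ∑ i, ∑ j, z p i * (S i j * z p j) := by
      funext p; simp [hqdef, dotProduct, Matrix.mulVec, Finset.mul_sum]
    rw [this]
    exact ContDiff.sum fun i _ => ContDiff.sum fun j _ =>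
      ((contDiff_pi.mp hz i).mul (contDiff_const.mul (contDiff_pi.mp hz j)))
  -- directional derivatives of q
  have hq1 : ∀ x t : ℝ, HasDerivAt (fun s => q (x, s)) (fderiv ℝ q (x, t) (0, 1)) t := by
    intro x t
    exact (hq.differentiable one_ne_zero (x, t)).hasFDerivAt.comp_hasDerivAt t
      ((hasDerivAt_const t x).prodMk (hasDerivAt_id t))
  have hq2 : ∀ x t : ℝ, HasDerivAt (fun y => q (y, t)) (fderiv ℝ q (x, t) (1, 0)) x := by
    intro x t
    exact (hq.differentiable one_ne_zero (x, t)).hasFDerivAt.comp_hasDerivAt x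
      ((hasDerivAt_id x).prodMk (hasDerivAt_const x t))
  -- directional derivatives of z
  have hzt : ∀ x t : ℝ, HasDerivAt (fun s => z (x, s)) (deriv (fun s => z (x, s)) t) t := by
    intro x t
    exact (((hz' (x, t)).comp t
      ((differentiableAt_const x).prodMk differentiableAt_id)).hasDerivAt)
  have hzx : ∀ x t : ℝ, HasDerivAt (fun y => z (y, t)) (deriv (fun y => z (y, t)) x) x := by
    intro x t
    exact (((hz' (x, t)).comp x
      (differentiableAt_id.prodMk (differentiableAt_const t))).hasDerivAt)
  -- the PDE for q
  have key : ∀ x ∈ Set.Icc (0:ℝ) 1, ∀ t ≥ (0:ℝ),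
      fderiv ℝ q (x, t) (0, 1) = -ρ * fderiv ℝ q (x, t) (1, 0) := by
    intro x hx t ht
    have A := (hq1 x t).unique (quad_hasDerivAt S (hzt x t))
    have B := (hq2 x t).unique (quad_hasDerivAt S (hzx x t))
    rw [A, B, hpde x hx t ht]
    simp only [smul_dotProduct, Matrix.mulVec_smul, dotProduct_smul, smul_eq_mul]
    ring
  -- continuity of partial derivatives
  have hfc : Continuous (fderiv ℝ q) := hq.continuous_fderiv one_ne_zero
  have hP1 : Continuous (fun p : ℝ × ℝ => fderiv ℝ q p (0, 1)) :=
    hfc.clm_apply continuous_const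
  have hP2 : Continuous (fun p : ℝ × ℝ => fderiv ℝ q p (1, 0)) :=
    hfc.clm_apply continuous_const
  -- FTC in t
  have ftc_t : ∀ x : ℝ, (∫ t in (0:ℝ)..T, fderiv ℝ q (x, t) (0, 1)) = q (x, T) - q (x, 0) := by
    intro x
    exact intervalIntegral.integral_eq_sub_of_hasDerivAt (fun t _ => hq1 x t)
      ((hP1.comp (continuous_const.prodMk continuous_id)).intervalIntegrable 0 T)
  -- FTC in x
  have ftc_x : ∀ t : ℝ, (∫ x in (0:ℝ)..1, fderiv ℝ q (x, t) (1, 0)) = q (1, t) - q (0, t) := by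
    intro t
    exact intervalIntegral.integral_eq_sub_of_hasDerivAt (fun x _ => hq2 x t)
      ((hP2.comp (continuous_id.prodMk continuous_const)).intervalIntegrable 0 1)
  -- Fubini
  have fub : (∫ x in (0:ℝ)..1, ∫ t in (0:ℝ)..T, fderiv ℝ q (x, t) (0, 1))
      = ∫ t in (0:ℝ)..T, ∫ x in (0:ℝ)..1, fderiv ℝ q (x, t) (0, 1) := by
    have h01 : (0:ℝ) ≤ 1 := zero_le_one
    rw [intervalIntegral.integral_of_le h01, intervalIntegral.integral_of_le hT]
    simp_rw [intervalIntegral.integral_of_le hT, intervalIntegral.integral_of_le h01]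
    have hint : Integrable (Function.uncurry fun x t => fderiv ℝ q (x, t) (0, 1))
        ((volume.restrict (Set.Ioc (0:ℝ) 1)).prod (volume.restrict (Set.Ioc (0:ℝ) T))) := by
      rw [Measure.prod_restrict]
      have : IntegrableOn (fun p : ℝ × ℝ => fderiv ℝ q p (0, 1))
          (Set.Icc (0:ℝ) 1 ×ˢ Set.Icc (0:ℝ) T) (volume.prod volume) := by
        apply ContinuousOn.integrableOn_compact (isCompact_Icc.prod isCompact_Icc)
          hP1.continuousOn
      exact (this.mono_set (Set.prod_mono Set.Ioc_subset_Icc_self Set.Ioc_subset_Icc_self))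
    exact MeasureTheory.integral_integral_swap hint
  -- initial condition for q
  have hq0 : ∀ x ∈ Set.Icc (0:ℝ) 1, q (x, 0) = 0 := by
    intro x hx; simp [hqdef, hinit x hx]
  calc ∫ x in (0:ℝ)..1, z (x, T) ⬝ᵥ S.mulVec (z (x, T))
      = ∫ x in (0:ℝ)..1, ∫ t in (0:ℝ)..T, fderiv ℝ q (x, t) (0, 1) := by
        apply intervalIntegral.integral_congr
        intro x hx
        rw [Set.uIcc_of_le zero_le_one] at hx
        beta_reduce
        rw [ftc_t x, hq0 x hx, sub_zero]
    _ = ∫ t in (0:ℝ)..T, ∫ x in (0:ℝ)..1, fderiv ℝ q (x, t) (0, 1) := fub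
    _ = ∫ t in (0:ℝ)..T, ρ * (q (0, t) - q (1, t)) := by
        apply intervalIntegral.integral_congr
        intro t htt
        rw [Set.uIcc_of_le hT] at htt
        have : (∫ x in (0:ℝ)..1, fderiv ℝ q (x, t) (0, 1))
            = ∫ x in (0:ℝ)..1, -ρ * fderiv ℝ q (x, t) (1, 0) := by
          apply intervalIntegral.integral_congr
          intro x hx
          rw [Set.uIcc_of_le zero_le_one] at hx
          exact key x hx t htt.1
        beta_reduce
        rw [this, intervalIntegral.integral_const_mul, ftc_x t]
        ring
    _ = ρ * ∫ t in (0:ℝ)..T,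
          (z (0, t) ⬝ᵥ S.mulVec (z (0, t)) - z (1, t) ⬝ᵥ S.mulVec (z (1, t))) := by
        rw [← intervalIntegral.integral_const_mul]
end

section
/- (Lemma 1) Let ρ > 0, l ∈ ℕ, N ∈ ℕ, let S ∈ ℝ^{l×l} be symmetric positive definite, and let z : [0,1] × [0,∞) → ℝ^l be continuously differentiable, satisfy the transport equation z_t(x,t) = −ρ z_x(x,t) for all (x,t) ∈ [0,1] × [0,∞), and have zero initial condition z(x,0) = 0 for all x ∈ [0,1]. Define Ω_k(t) = ∫₀¹ z(x,t) 𝓛_k(x) dx. Then for every T ≥ 0: ρ ∫₀^T ( z(0,t)ᵀ S z(0,t) − z(1,t)ᵀ S z(1,t) ) dt − Σ_{k=0}^{N} (2k+1) Ω_k(T)ᵀ S Ω_k(T) ≥ 0. -/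
open Finset Matrix

namespace SLAux
open Polynomial intervalIntegral

noncomputable def fP (k : ℕ) : Polynomial ℝ := (X ^ 2 - X) ^ k

lemma fP_expand (k : ℕ) :
    fP k = ∑ l ∈ range (k + 1),
      Polynomial.C ((-1 : ℝ) ^ (k - l) * (k.choose l)) * X ^ (k + l) := by
  rw [fP, sub_eq_add_neg, add_pow]
  refine Finset.sum_congr rfl fun l hl => ?_
  rw [Finset.mem_range, Nat.lt_succ_iff] at hl
  rw [← pow_mul, neg_pow, show k + l = 2 * l + (k - l) by omega, pow_add,
    C_mul, C_pow, C_neg, C_1, C_eq_natCast]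
  ring

lemma iter_deriv_fP (k : ℕ) :
    derivative^[k] (fP k) = ∑ l ∈ range (k + 1),
      Polynomial.C ((-1 : ℝ) ^ (k - l) * (k.choose l) * ((k + l).descFactorial k)) * X ^ l := by
  rw [fP_expand, iterate_derivative_sum]
  refine Finset.sum_congr rfl fun l hl => ?_
  rw [iterate_derivative_C_mul, iterate_derivative_X_pow_eq_C_mul, Nat.add_sub_cancel_left, ← mul_assoc, ← C_mul]

lemma eval_iter_deriv (k : ℕ) (x : ℝ) :
    (derivative^[k] (fP k)).eval x = (k.factorial : ℝ) * shiftedLegendre k x := by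
  rw [iter_deriv_fP, _root_.shiftedLegendre, eval_finset_sum, Finset.mul_sum, Finset.mul_sum]
  refine Finset.sum_congr rfl fun l hl => ?_
  rw [Finset.mem_range, Nat.lt_succ_iff] at hl
  have h1 : (-1 : ℝ) ^ (k - l) = (-1) ^ k * (-1) ^ l := by
    have h : (-1 : ℝ) ^ (k + l) = (-1) ^ (k - l) := by
      rw [show k + l = k - l + 2 * l by omega, pow_add, pow_mul]
      norm_num
    rw [← pow_add]
    exact h.symm
  have h2 : ((k + l).descFactorial k : ℝ) = (k.factorial : ℝ) * ((k + l).choose l) := by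
    rw [Nat.descFactorial_eq_factorial_mul_choose]
    have : (k + l).choose k = (k + l).choose l := by
      rw [← Nat.choose_symm (Nat.le_add_right k l), Nat.add_sub_cancel_left]
    rw [this]; push_cast; ring
  simp only [eval_mul, eval_C, eval_pow, eval_X, h1, h2]
  ring

lemma iter2_deriv_fP (k : ℕ) :
    derivative^[k] (derivative^[k] (fP k)) = Polynomial.C (((2 * k).factorial : ℝ)) := by
  rw [iter_deriv_fP, iterate_derivative_sum]
  have hterm : ∀ l ∈ range (k + 1), l ≠ k →
      derivative^[k] (Polynomial.C ((-1 : ℝ) ^ (k - l) * (k.choose l) * ((k + l).descFactorial k)) * X ^ l) = 0 := by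
    intro l hl hlk
    rw [Finset.mem_range, Nat.lt_succ_iff] at hl
    rw [iterate_derivative_C_mul, iterate_derivative_X_pow_eq_C_mul,
      Nat.descFactorial_eq_zero_iff_lt.2 (lt_of_le_of_ne hl hlk)]
    simp
  rw [Finset.sum_eq_single_of_mem k (Finset.self_mem_range_succ k) hterm,
    iterate_derivative_C_mul, iterate_derivative_X_pow_eq_C_mul, Nat.descFactorial_self,
    Nat.choose_self, Nat.sub_self, pow_zero, pow_zero]
  rw [mul_one, ← C_mul]
  congr 1
  rw [one_mul, Nat.cast_one, one_mul, ← Nat.cast_mul]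
  congr 1
  have h := Nat.choose_mul_factorial_mul_factorial (Nat.le_add_right k k)
  rw [Nat.add_sub_cancel] at h
  rw [Nat.descFactorial_eq_factorial_mul_choose, two_mul, ← h]
  ring

lemma boundary {k j : ℕ} (hj : j < k) {x : ℝ} (hx : x ^ 2 - x = 0) :
    (derivative^[j] (fP k)).eval x = 0 := by
  obtain ⟨r, hr⟩ := pow_sub_dvd_iterate_derivative_pow (X ^ 2 - X : Polynomial ℝ) k j
  rw [fP, hr, eval_mul, eval_pow]
  have : ((X:Polynomial ℝ) ^ 2 - X).eval x = 0 := by simp [hx]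
  rw [this, zero_pow (by omega), zero_mul]

lemma poly_ibp (p q : Polynomial ℝ) :
    ∫ x in (0:ℝ)..1, p.eval x * (derivative q).eval x
      = p.eval 1 * q.eval 1 - p.eval 0 * q.eval 0
        - ∫ x in (0:ℝ)..1, (derivative p).eval x * q.eval x := by
  refine intervalIntegral.integral_mul_deriv_eq_deriv_mul (u := fun x => p.eval x)
    (v := fun x => q.eval x) (u' := fun x => (derivative p).eval x)
    (v' := fun x => (derivative q).eval x) ?_ ?_ ?_ ?_
  · exact fun x _ => p.hasDerivAt x
  · exact fun x _ => q.hasDerivAt x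
  · exact ((derivative p).continuous_aeval).intervalIntegrable 0 1
  · exact ((derivative q).continuous_aeval).intervalIntegrable 0 1

lemma iter_ibp (k : ℕ) (q : Polynomial ℝ) :
    ∀ m, m ≤ k → ∫ x in (0:ℝ)..1, (derivative^[k] (fP k)).eval x * q.eval x
      = (-1 : ℝ) ^ m * ∫ x in (0:ℝ)..1,
          (derivative^[k - m] (fP k)).eval x * (derivative^[m] q).eval x := by
  intro m
  induction m with
  | zero => intro _; simp
  | succ m ih =>
    intro hm
    rw [ih (by omega)]
    have hkm : k - m = (k - (m + 1)) + 1 := by omega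
    have hd : derivative^[k - m] (fP k)
        = derivative (derivative^[k - (m + 1)] (fP k)) := by
      rw [hkm, Function.iterate_succ_apply']
    rw [hd]
    have := poly_ibp (derivative^[m] q) (derivative^[k - (m + 1)] (fP k))
    have hb1 : (derivative^[k - (m + 1)] (fP k)).eval 1 = 0 :=
      boundary (by omega) (by norm_num)
    have hb0 : (derivative^[k - (m + 1)] (fP k)).eval 0 = 0 :=
      boundary (by omega) (by norm_num)
    have heq : ∫ x in (0:ℝ)..1,
        (derivative (derivative^[k - (m+1)] (fP k))).eval x * (derivative^[m] q).eval x
        = - ∫ x in (0:ℝ)..1,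
            (derivative^[k - (m+1)] (fP k)).eval x * (derivative^[m+1] q).eval x := by
      have h1 : (∫ x in (0:ℝ)..1,
          (derivative (derivative^[k - (m+1)] (fP k))).eval x * (derivative^[m] q).eval x)
          = ∫ x in (0:ℝ)..1,
          (derivative^[m] q).eval x * (derivative (derivative^[k - (m+1)] (fP k))).eval x :=
        intervalIntegral.integral_congr fun x _ => mul_comm _ _
      rw [h1, this, hb1, hb0, mul_zero, mul_zero, sub_zero, zero_sub]
      congr 1
      refine intervalIntegral.integral_congr fun x _ => ?_
      rw [Function.iterate_succ_apply', mul_comm]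
    rw [heq, pow_succ]
    ring

lemma beta_nat : ∀ n m : ℕ, (∫ x in (0:ℝ)..1, x ^ m * (1 - x) ^ n)
    = (m.factorial : ℝ) * n.factorial / (m + n + 1).factorial := by
  intro n
  induction n with
  | zero =>
    intro m
    simp only [pow_zero, mul_one, Nat.factorial_zero, Nat.cast_one, integral_pow]
    rw [Nat.factorial_succ]
    push_cast
    rw [one_pow, zero_pow (by omega)]
    field_simp
    norm_num
  | succ n ih =>
    intro m
    have hm0 : ((m:ℝ) + 1) ≠ 0 := by positivity
    have hu : ∀ x ∈ Set.uIcc (0:ℝ) 1, HasDerivAt (fun y : ℝ => (1 - y) ^ (n + 1))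
        (-((n:ℝ)+1) * (1 - x) ^ n) x := by
      intro x _
      have h : HasDerivAt (fun y : ℝ => 1 - y) (-1) x := by
        simpa using (hasDerivAt_id x).const_sub 1
      have h2 := h.pow (n+1)
      refine h2.congr_deriv ?_
      push_cast [Nat.add_sub_cancel]
      ring
    have hv : ∀ x ∈ Set.uIcc (0:ℝ) 1, HasDerivAt (fun y : ℝ => y ^ (m+1) / ((m:ℝ)+1))
        (x ^ m) x := by
      intro x _
      have h2 := (hasDerivAt_pow (m+1) x).div_const ((m:ℝ)+1)
      refine h2.congr_deriv ?_
      push_cast [Nat.add_sub_cancel]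
      field_simp
    have key := intervalIntegral.integral_mul_deriv_eq_deriv_mul hu hv
      (Continuous.intervalIntegrable (by fun_prop) 0 1)
      (Continuous.intervalIntegrable (by fun_prop) 0 1)
    have hgoal : (∫ x in (0:ℝ)..1, x ^ m * (1 - x) ^ (n+1))
        = ∫ x in (0:ℝ)..1, (1 - x) ^ (n + 1) * x ^ m :=
      intervalIntegral.integral_congr fun x _ => mul_comm _ _
    have hrw : (∫ x in (0:ℝ)..1, (-((n:ℝ)+1) * (1 - x) ^ n) * (x ^ (m+1) / ((m:ℝ)+1)))
        = (-((n:ℝ)+1) / ((m:ℝ)+1)) * ∫ x in (0:ℝ)..1, x ^ (m+1) * (1 - x) ^ n := by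
      rw [← intervalIntegral.integral_const_mul]
      refine intervalIntegral.integral_congr fun x _ => ?_
      field_simp
    rw [hgoal, key, hrw, ih (m+1), show m + 1 + n + 1 = m + (n + 1) + 1 by omega]
    have hF : ((m + (n+1) + 1).factorial : ℝ) ≠ 0 :=
      (Nat.cast_pos.2 (Nat.factorial_pos _)).ne'
    rw [Nat.factorial_succ n, Nat.factorial_succ m]
    push_cast
    norm_num
    field_simp
    ring

lemma integral_fP (k : ℕ) : (∫ x in (0:ℝ)..1, (fP k).eval x)
    = (-1:ℝ)^k * ((k.factorial : ℝ) * k.factorial / ((2*k+1).factorial)) := by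
  have hev : ∀ x : ℝ, (fP k).eval x = (-1:ℝ)^k * (x^k * (1-x)^k) := by
    intro x
    rw [fP, eval_pow]
    have h : ((X:Polynomial ℝ)^2 - X).eval x = x^2 - x := by simp
    rw [h, show (x^2 - x) = (-1) * (x * (1-x)) by ring, mul_pow, mul_pow]
  rw [intervalIntegral.integral_congr (fun x _ => hev x),
    intervalIntegral.integral_const_mul, beta_nat k k, show k + k + 1 = 2*k+1 by omega]

lemma key_int (j k : ℕ) (hjk : j ≤ k) :
    (∫ x in (0:ℝ)..1, (derivative^[k] (fP k)).eval x * (derivative^[j] (fP j)).eval x)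
      = if j = k then ((2*k).factorial : ℝ) * ((k.factorial : ℝ) * k.factorial)
          / ((2*k+1).factorial) else 0 := by
  have h := iter_ibp k (derivative^[j] (fP j)) k le_rfl
  rw [Nat.sub_self] at h
  simp only [Function.iterate_zero_apply] at h
  rcases eq_or_lt_of_le hjk with rfl | hlt
  · rw [if_pos rfl, h, iter2_deriv_fP]
    simp only [eval_C]
    rw [intervalIntegral.integral_mul_const, integral_fP]
    have hsq : ((-1:ℝ)^j) * ((-1:ℝ)^j) = 1 := by
      rw [← pow_add]
      exact Even.neg_one_pow ⟨j, rfl⟩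
    linear_combination ((j.factorial:ℝ) * j.factorial / ((2*j+1).factorial) * (2*j).factorial) * hsq
  · rw [if_neg hlt.ne, h]
    have hz : derivative^[k] (derivative^[j] (fP j)) = 0 := by
      apply iterate_derivative_eq_zero
      have h1 : ((X:Polynomial ℝ)^2 - X).natDegree ≤ 2 := by
        refine le_trans (natDegree_sub_le _ _) ?_
        simp [natDegree_X_pow, natDegree_X]
      have h2 : (fP j).natDegree ≤ j * 2 :=
        le_trans (natDegree_pow_le) (Nat.mul_le_mul_left j h1)
      have h3 := natDegree_iterate_derivative (fP j) j
      omega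
    rw [hz]
    simp

lemma orth_le (j k : ℕ) (hjk : j ≤ k) :
    (∫ x in (0:ℝ)..1, shiftedLegendre j x * shiftedLegendre k x)
      = if j = k then 1/(2*(k:ℝ)+1) else 0 := by
  have hj : (j.factorial:ℝ) ≠ 0 := (Nat.cast_pos.2 (Nat.factorial_pos _)).ne'
  have hk : (k.factorial:ℝ) ≠ 0 := (Nat.cast_pos.2 (Nat.factorial_pos _)).ne'
  have hfac : ∀ x:ℝ, shiftedLegendre j x * shiftedLegendre k x
      = ((j.factorial:ℝ) * k.factorial)⁻¹
        * ((derivative^[k] (fP k)).eval x * (derivative^[j] (fP j)).eval x) := by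
    intro x
    have e1 := eval_iter_deriv j x
    have e2 := eval_iter_deriv k x
    rw [e1, e2]
    field_simp
  rw [intervalIntegral.integral_congr (fun x _ => hfac x),
    intervalIntegral.integral_const_mul, key_int j k hjk]
  split_ifs with h
  · subst h
    have h2j : ((2*j+1).factorial : ℝ) = ((2*j:ℕ):ℝ) * (2*j).factorial + (2*j).factorial := by
      rw [Nat.factorial_succ]
      push_cast
      ring
    have hf : ((2*j).factorial : ℝ) ≠ 0 := (Nat.cast_pos.2 (Nat.factorial_pos _)).ne'
    rw [h2j]
    field_simp
    push_cast
    ring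
  · simp

lemma orth (j k : ℕ) : (∫ x in (0:ℝ)..1, shiftedLegendre j x * shiftedLegendre k x)
    = if j = k then 1/(2*(k:ℝ)+1) else 0 := by
  rcases le_total j k with h | h
  · exact orth_le j k h
  · have h2 := orth_le k j h
    have hc : (∫ x in (0:ℝ)..1, shiftedLegendre j x * shiftedLegendre k x)
        = ∫ x in (0:ℝ)..1, shiftedLegendre k x * shiftedLegendre j x :=
      intervalIntegral.integral_congr fun x _ => mul_comm _ _
    rw [hc, h2]
    by_cases hjk : j = k
    · subst hjk; simp
    · rw [if_neg (Ne.symm hjk), if_neg hjk]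

lemma continuous_shiftedLegendre (k : ℕ) : Continuous (shiftedLegendre k) := by
  unfold _root_.shiftedLegendre
  fun_prop

section B
open MeasureTheory

variable {l : ℕ}

lemma dot_symm (S : Matrix (Fin l) (Fin l) ℝ) (hS : S.IsSymm) (v w : Fin l → ℝ) :
    v ⬝ᵥ S.mulVec w = w ⬝ᵥ S.mulVec v := by
  simp only [dotProduct, Matrix.mulVec, Finset.mul_sum]
  rw [Finset.sum_comm]
  refine Finset.sum_congr rfl fun i _ => Finset.sum_congr rfl fun j _ => ?_
  rw [← hS.apply i j]
  ring

lemma dot_mulVec_sum (S : Matrix (Fin l) (Fin l) ℝ) (v : Fin l → ℝ) (t : Finset ℕ)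
    (a : ℕ → ℝ) (w : ℕ → Fin l → ℝ) :
    v ⬝ᵥ S.mulVec (∑ k ∈ t, a k • w k) = ∑ k ∈ t, a k * (v ⬝ᵥ S.mulVec (w k)) := by
  classical
  induction t using Finset.induction with
  | empty => simp [dotProduct, Matrix.mulVec]
  | insert a s hnot ih =>
    rw [Finset.sum_insert hnot, Finset.sum_insert hnot, ← ih]
    rw [Matrix.mulVec_add, dotProduct_add, Matrix.mulVec_smul, dotProduct_smul,
      smul_eq_mul]

lemma dot_continuous {α : Type*} [TopologicalSpace α]
    (S : Matrix (Fin l) (Fin l) ℝ) (f g : α → Fin l → ℝ)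
    (hf : ∀ i, Continuous fun x => f x i) (hg : ∀ i, Continuous fun x => g x i) :
    Continuous fun x => f x ⬝ᵥ S.mulVec (g x) := by
  simp only [dotProduct, Matrix.mulVec]
  refine continuous_finset_sum _ fun i _ => (hf i).mul ?_
  exact continuous_finset_sum _ fun j _ => continuous_const.mul (hg j)

lemma bessel (N : ℕ) (S : Matrix (Fin l) (Fin l) ℝ) (hS : S.IsSymm)
    (hpos : ∀ v : Fin l → ℝ, 0 ≤ v ⬝ᵥ S.mulVec v)
    (y : ℝ → Fin l → ℝ) (hy : ∀ i, Continuous fun x => y x i)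
    (Ω : ℕ → Fin l → ℝ)
    (hΩ : ∀ k i, Ω k i = ∫ x in (0:ℝ)..1, y x i * shiftedLegendre k x) :
    ∑ k ∈ range (N + 1), (2 * (k:ℝ) + 1) * (Ω k ⬝ᵥ S.mulVec (Ω k))
      ≤ ∫ x in (0:ℝ)..1, y x ⬝ᵥ S.mulVec (y x) := by
  set c : ℕ → ℝ := fun k => 2 * (k:ℝ) + 1 with hc
  set a : ℕ → ℝ → ℝ := fun k x => c k * shiftedLegendre k x with ha
  set s : ℝ → Fin l → ℝ := fun x => ∑ k ∈ range (N+1), a k x • Ω k with hs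
  have hac : ∀ k, Continuous (a k) := fun k => continuous_const.mul (continuous_shiftedLegendre k)
  have hsc : ∀ i, Continuous fun x => s x i := by
    intro i
    simp only [hs, Finset.sum_apply, Pi.smul_apply, smul_eq_mul]
    exact continuous_finset_sum _ fun k _ => (hac k).mul continuous_const
  -- the inner product with a fixed vector against y, integrated, gives Ω
  have hproj : ∀ (k : ℕ) (v : Fin l → ℝ),
      (∫ x in (0:ℝ)..1, a k x * (y x ⬝ᵥ S.mulVec v)) = c k * (Ω k ⬝ᵥ S.mulVec v) := by
    intro k v
    have h1 : ∀ x : ℝ, a k x * (y x ⬝ᵥ S.mulVec v)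
        = ∑ i, (c k * ((y x i * shiftedLegendre k x) * (S.mulVec v i))) := by
      intro x
      simp only [dotProduct, ha, Finset.mul_sum]
      refine Finset.sum_congr rfl fun i _ => by ring
    rw [intervalIntegral.integral_congr (fun x _ => h1 x), intervalIntegral.integral_finset_sum]
    · have h2 : ∀ i, (∫ x in (0:ℝ)..1, c k * ((y x i * shiftedLegendre k x) * (S.mulVec v i)))
          = c k * (Ω k i * (S.mulVec v i)) := by
        intro i
        rw [intervalIntegral.integral_const_mul, intervalIntegral.integral_mul_const, hΩ k i]
      simp only [h2, dotProduct, Finset.mul_sum]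
    · intro i _
      exact (Continuous.intervalIntegrable (by
        exact continuous_const.mul (((hy i).mul (continuous_shiftedLegendre k)).mul
          continuous_const)) 0 1)
  have hys : (∫ x in (0:ℝ)..1, y x ⬝ᵥ S.mulVec (s x))
      = ∑ k ∈ range (N+1), c k * (Ω k ⬝ᵥ S.mulVec (Ω k)) := by
    have h1 : ∀ x : ℝ, y x ⬝ᵥ S.mulVec (s x)
        = ∑ k ∈ range (N+1), a k x * (y x ⬝ᵥ S.mulVec (Ω k)) := by
      intro x
      rw [hs, dot_mulVec_sum]
    rw [intervalIntegral.integral_congr (fun x _ => h1 x), intervalIntegral.integral_finset_sum]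
    · refine Finset.sum_congr rfl fun k _ => ?_
      rw [hproj k (Ω k)]
    · intro k _
      exact Continuous.intervalIntegrable
        ((hac k).mul (dot_continuous S y (fun _ => Ω k) hy (fun i => continuous_const))) 0 1
  have hss : (∫ x in (0:ℝ)..1, s x ⬝ᵥ S.mulVec (s x))
      = ∑ k ∈ range (N+1), c k * (Ω k ⬝ᵥ S.mulVec (Ω k)) := by
    have h1 : ∀ x : ℝ, s x ⬝ᵥ S.mulVec (s x)
        = ∑ k ∈ range (N+1), a k x * (∑ j ∈ range (N+1), a j x * (Ω k ⬝ᵥ S.mulVec (Ω j))) := by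
      intro x
      rw [dot_symm S hS, hs, dot_mulVec_sum]
      refine Finset.sum_congr rfl fun k _ => ?_
      congr 1
      rw [dot_symm S hS _ (Ω k)]
      show Ω k ⬝ᵥ S.mulVec (∑ j ∈ range (N+1), a j x • Ω j) = _
      rw [dot_mulVec_sum]
    rw [intervalIntegral.integral_congr (fun x _ => h1 x), intervalIntegral.integral_finset_sum]
    swap
    · intro k _
      refine Continuous.intervalIntegrable ((hac k).mul ?_) 0 1
      exact continuous_finset_sum _ fun j _ => (hac j).mul continuous_const
    have h2 : ∀ k ∈ range (N+1),
        (∫ x in (0:ℝ)..1, a k x * (∑ j ∈ range (N+1), a j x * (Ω k ⬝ᵥ S.mulVec (Ω j))))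
        = c k * (Ω k ⬝ᵥ S.mulVec (Ω k)) := by
      intro k hk
      have h3 : ∀ x : ℝ, a k x * (∑ j ∈ range (N+1), a j x * (Ω k ⬝ᵥ S.mulVec (Ω j)))
          = ∑ j ∈ range (N+1), (a k x * a j x) * (Ω k ⬝ᵥ S.mulVec (Ω j)) := by
        intro x
        rw [Finset.mul_sum]
        exact Finset.sum_congr rfl fun j _ => by ring
      rw [intervalIntegral.integral_congr (fun x _ => h3 x), intervalIntegral.integral_finset_sum]
      swap
      · intro j _
        exact Continuous.intervalIntegrable (((hac k).mul (hac j)).mul continuous_const) 0 1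
      have h4 : ∀ j ∈ range (N+1),
          (∫ x in (0:ℝ)..1, (a k x * a j x) * (Ω k ⬝ᵥ S.mulVec (Ω j)))
          = (if k = j then c k else 0) * (Ω k ⬝ᵥ S.mulVec (Ω j)) := by
        intro j _
        rw [intervalIntegral.integral_mul_const]
        congr 1
        have h5 : ∀ x : ℝ, a k x * a j x
            = (c k * c j) * (shiftedLegendre k x * shiftedLegendre j x) := by
          intro x; simp only [ha]; ring
        rw [intervalIntegral.integral_congr (fun x _ => h5 x),
          intervalIntegral.integral_const_mul, orth k j]
        by_cases hkj : k = j
        · subst hkj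
          rw [if_pos rfl, if_pos rfl, hc]
          have : (2*(k:ℝ)+1) ≠ 0 := by positivity
          field_simp
        · rw [if_neg hkj, if_neg hkj, mul_zero]
      rw [Finset.sum_congr rfl h4]
      simp only [ite_mul, zero_mul]
      rw [Finset.sum_ite_eq (range (N+1)) k (fun j => c k * (Ω k ⬝ᵥ S.mulVec (Ω j))), if_pos hk]
    exact Finset.sum_congr rfl h2
  -- nonnegativity of the remainder
  have hrr : 0 ≤ ∫ x in (0:ℝ)..1, (y x - s x) ⬝ᵥ S.mulVec (y x - s x) :=
    intervalIntegral.integral_nonneg (by norm_num) (fun x _ => hpos _)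
  have hexp : ∀ x : ℝ, (y x - s x) ⬝ᵥ S.mulVec (y x - s x)
      = y x ⬝ᵥ S.mulVec (y x) - 2 * (y x ⬝ᵥ S.mulVec (s x)) + s x ⬝ᵥ S.mulVec (s x) := by
    intro x
    rw [Matrix.mulVec_sub, sub_dotProduct, dotProduct_sub, dotProduct_sub,
      dot_symm S hS (s x) (y x)]
    ring
  rw [intervalIntegral.integral_congr (fun x _ => hexp x)] at hrr
  have hi1 : IntervalIntegrable (fun x => y x ⬝ᵥ S.mulVec (y x)) volume 0 1 :=
    Continuous.intervalIntegrable (dot_continuous S y y hy hy) 0 1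
  have hi2 : IntervalIntegrable (fun x => 2 * (y x ⬝ᵥ S.mulVec (s x))) volume 0 1 :=
    Continuous.intervalIntegrable (continuous_const.mul (dot_continuous S y s hy hsc)) 0 1
  have hi3 : IntervalIntegrable (fun x => s x ⬝ᵥ S.mulVec (s x)) volume 0 1 :=
    Continuous.intervalIntegrable (dot_continuous S s s hsc hsc) 0 1
  rw [intervalIntegral.integral_add (hi1.sub hi2) hi3, intervalIntegral.integral_sub hi1 hi2,
    intervalIntegral.integral_const_mul, hys, hss] at hrr
  have : ∑ k ∈ range (N + 1), (2 * (k:ℝ) + 1) * (Ω k ⬝ᵥ S.mulVec (Ω k))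
      = ∑ k ∈ range (N+1), c k * (Ω k ⬝ᵥ S.mulVec (Ω k)) := rfl
  rw [this]
  linarith

lemma hasDerivAt_quad (S : Matrix (Fin l) (Fin l) ℝ) (hS : S.IsSymm)
    {f : ℝ → Fin l → ℝ} {v : Fin l → ℝ} {t : ℝ} (hf : HasDerivAt f v t) :
    HasDerivAt (fun s => f s ⬝ᵥ S.mulVec (f s)) (2 * (v ⬝ᵥ S.mulVec (f t))) t := by
  have hfi : ∀ i, HasDerivAt (fun s => f s i) (v i) t := fun i => hasDerivAt_pi.1 hf i
  have hinner : ∀ i : Fin l, HasDerivAt (fun s => ∑ j, S i j * f s j) (∑ j, S i j * v j) t :=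
    fun i => HasDerivAt.fun_sum (fun j _ => (hfi j).const_mul (S i j))
  have hterm : ∀ i : Fin l, HasDerivAt (fun s => f s i * ∑ j, S i j * f s j)
      (v i * (∑ j, S i j * f t j) + f t i * (∑ j, S i j * v j)) t :=
    fun i => (hfi i).mul (hinner i)
  have hsum := HasDerivAt.fun_sum (fun i (_ : i ∈ Finset.univ) => hterm i)
  have heq1 : (fun s => ∑ i, f s i * ∑ j, S i j * f s j)
      = fun s => f s ⬝ᵥ S.mulVec (f s) := by
    funext s
    simp [dotProduct, Matrix.mulVec]
  have heq2 : (∑ i, (v i * (∑ j, S i j * f t j) + f t i * (∑ j, S i j * v j)))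
      = 2 * (v ⬝ᵥ S.mulVec (f t)) := by
    rw [Finset.sum_add_distrib]
    have e1 : ∑ i, v i * (∑ j, S i j * f t j) = v ⬝ᵥ S.mulVec (f t) := by
      simp [dotProduct, Matrix.mulVec]
    have e2 : ∑ i, f t i * (∑ j, S i j * v j) = f t ⬝ᵥ S.mulVec v := by
      simp [dotProduct, Matrix.mulVec]
    rw [e1, e2, dot_symm S hS (f t) v]
    ring
  rw [heq1, heq2] at hsum
  exact hsum

lemma fubini_cont (f : ℝ × ℝ → ℝ) (hf : Continuous f) {T : ℝ} (hT : 0 ≤ T) :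
    (∫ x in (0:ℝ)..1, ∫ t in (0:ℝ)..T, f (x,t)) = ∫ t in (0:ℝ)..T, ∫ x in (0:ℝ)..1, f (x,t) := by
  simp_rw [intervalIntegral.integral_of_le hT, intervalIntegral.integral_of_le (zero_le_one (α := ℝ))]
  have hint : Integrable (Function.uncurry fun x t => f (x, t))
      ((volume.restrict (Set.Ioc (0:ℝ) 1)).prod (volume.restrict (Set.Ioc (0:ℝ) T))) := by
    rw [Measure.prod_restrict]
    have h1 : IntegrableOn f (Set.Icc (0:ℝ) 1 ×ˢ Set.Icc (0:ℝ) T) volume :=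
      ContinuousOn.integrableOn_compact (isCompact_Icc.prod isCompact_Icc) hf.continuousOn
    exact h1.mono_set (Set.prod_mono Set.Ioc_subset_Icc_self Set.Ioc_subset_Icc_self)
  exact MeasureTheory.integral_integral_swap hint

lemma energy (ρ : ℝ) (S : Matrix (Fin l) (Fin l) ℝ) (hS : S.IsSymm)
    (z : ℝ × ℝ → Fin l → ℝ) (hz : ContDiff ℝ 1 z)
    (hpde : ∀ x ∈ Set.Icc (0:ℝ) 1, ∀ t ≥ (0:ℝ),
      deriv (fun s => z (x, s)) t = -ρ • deriv (fun y => z (y, t)) x)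
    (hinit : ∀ x ∈ Set.Icc (0:ℝ) 1, z (x, 0) = 0)
    (T : ℝ) (hT : 0 ≤ T) :
    ρ * (∫ t in (0:ℝ)..T,
        (z (0,t) ⬝ᵥ S.mulVec (z (0,t)) - z (1,t) ⬝ᵥ S.mulVec (z (1,t))))
      = ∫ x in (0:ℝ)..1, z (x,T) ⬝ᵥ S.mulVec (z (x,T)) := by
  have hdz : Differentiable ℝ z := hz.differentiable one_ne_zero
  have hzc : Continuous z := hz.continuous
  have hzci : ∀ i, Continuous fun p : ℝ × ℝ => z p i := fun i => (continuous_apply i).comp hzc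
  have hDc : Continuous fun p : ℝ × ℝ => fderiv ℝ z p := hz.continuous_fderiv one_ne_zero
  have hDvc : ∀ v0 : ℝ × ℝ, Continuous fun p : ℝ × ℝ => fderiv ℝ z p v0 := fun v0 =>
    (ContinuousLinearMap.apply ℝ (Fin l → ℝ) v0).continuous.comp hDc
  have hDvci : ∀ (v0 : ℝ × ℝ) (i : Fin l), Continuous fun p : ℝ × ℝ => fderiv ℝ z p v0 i :=
    fun v0 i => (continuous_apply i).comp (hDvc v0)
  set u : ℝ × ℝ → ℝ := fun p => 2 * (fderiv ℝ z p (0,1) ⬝ᵥ S.mulVec (z p)) with hu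
  set w : ℝ × ℝ → ℝ := fun p => 2 * (fderiv ℝ z p (1,0) ⬝ᵥ S.mulVec (z p)) with hw
  have huc : Continuous u :=
    continuous_const.mul (dot_continuous S _ _ (hDvci (0,1)) hzci)
  have hwc : Continuous w :=
    continuous_const.mul (dot_continuous S _ _ (hDvci (1,0)) hzci)
  have hcurve_t : ∀ x t : ℝ, HasDerivAt (fun s => z (x, s)) (fderiv ℝ z (x,t) (0,1)) t := by
    intro x t
    have h1 : HasDerivAt (fun s : ℝ => ((x, s) : ℝ × ℝ)) (0,1) t :=
      (hasDerivAt_const t x).prodMk (hasDerivAt_id t)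
    exact (hdz (x,t)).hasFDerivAt.comp_hasDerivAt t h1
  have hcurve_x : ∀ x t : ℝ, HasDerivAt (fun y => z (y, t)) (fderiv ℝ z (x,t) (1,0)) x := by
    intro x t
    have h1 : HasDerivAt (fun y : ℝ => ((y, t) : ℝ × ℝ)) (1,0) x :=
      (hasDerivAt_id x).prodMk (hasDerivAt_const x t)
    exact (hdz (x,t)).hasFDerivAt.comp_hasDerivAt x h1
  have hq_t : ∀ x t : ℝ, HasDerivAt (fun s => z (x,s) ⬝ᵥ S.mulVec (z (x,s))) (u (x,t)) t :=
    fun x t => hasDerivAt_quad S hS (hcurve_t x t)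
  have hq_x : ∀ x t : ℝ, HasDerivAt (fun y => z (y,t) ⬝ᵥ S.mulVec (z (y,t))) (w (x,t)) x :=
    fun x t => hasDerivAt_quad S hS (hcurve_x x t)
  have hInt_t : ∀ x : ℝ, (∫ t in (0:ℝ)..T, u (x,t))
      = z (x,T) ⬝ᵥ S.mulVec (z (x,T)) - z (x,0) ⬝ᵥ S.mulVec (z (x,0)) := by
    intro x
    exact intervalIntegral.integral_eq_sub_of_hasDerivAt (fun t _ => hq_t x t)
      (Continuous.intervalIntegrable (huc.comp (continuous_const.prodMk continuous_id)) 0 T)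
  have hInt_x : ∀ t : ℝ, (∫ x in (0:ℝ)..1, w (x,t))
      = z (1,t) ⬝ᵥ S.mulVec (z (1,t)) - z (0,t) ⬝ᵥ S.mulVec (z (0,t)) := by
    intro t
    exact intervalIntegral.integral_eq_sub_of_hasDerivAt (fun x _ => hq_x x t)
      (Continuous.intervalIntegrable (hwc.comp (continuous_id.prodMk continuous_const)) 0 1)
  have hud : ∀ x ∈ Set.Icc (0:ℝ) 1, ∀ t ≥ (0:ℝ), u (x,t) = -ρ * w (x,t) := by
    intro x hx t ht
    have h1 : fderiv ℝ z (x,t) (0,1) = deriv (fun s => z (x,s)) t := ((hcurve_t x t).deriv).symm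
    have h2 : fderiv ℝ z (x,t) (1,0) = deriv (fun y => z (y,t)) x := ((hcurve_x x t).deriv).symm
    rw [hu, hw]
    simp only []
    rw [h1, h2, hpde x hx t ht, smul_dotProduct, smul_eq_mul]
    ring
  -- assemble
  have e1 : (∫ x in (0:ℝ)..1, z (x,T) ⬝ᵥ S.mulVec (z (x,T)))
      = ∫ x in (0:ℝ)..1, ∫ t in (0:ℝ)..T, u (x,t) := by
    refine intervalIntegral.integral_congr fun x hx => ?_
    rw [Set.uIcc_of_le (zero_le_one (α := ℝ))] at hx
    rw [hInt_t x, hinit x hx]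
    simp
  rw [e1, fubini_cont u huc hT, ← intervalIntegral.integral_const_mul]
  refine intervalIntegral.integral_congr fun t ht => ?_
  rw [Set.uIcc_of_le hT] at ht
  have inner : (∫ x in (0:ℝ)..1, u (x,t)) = ∫ x in (0:ℝ)..1, -ρ * w (x,t) := by
    refine intervalIntegral.integral_congr fun x hx => ?_
    rw [Set.uIcc_of_le (zero_le_one (α := ℝ))] at hx
    exact hud x hx t ht.1
  rw [inner, intervalIntegral.integral_const_mul, hInt_x t]
  ring

end B

end SLAux

/-- **Lemma 1** (finite-horizon IQC with terminal cost for the transport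
equation): for `S ≻ 0` symmetric and `z` a solution of `z_t = −ρ z_x` on
`[0,1] × [0,∞)` with zero initial condition, for every `T ≥ 0`,
`ρ ∫₀^T ( z(0,t)ᵀ S z(0,t) − z(1,t)ᵀ S z(1,t) ) dt
  − ∑_{k=0}^{N} (2k+1) Ω_k(T)ᵀ S Ω_k(T) ≥ 0`. -/
theorem transport_IQC_terminal_cost
    (ρ : ℝ) (hρ : 0 < ρ) (l N : ℕ)
    (S : Matrix (Fin l) (Fin l) ℝ) (hSsymm : S.IsSymm)
    (hSpd : ∀ v : Fin l → ℝ, v ≠ 0 → 0 < v ⬝ᵥ S.mulVec v)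
    (z : ℝ × ℝ → Fin l → ℝ)
    (hz : ContDiff ℝ 1 z)
    (hpde : ∀ x ∈ Set.Icc (0:ℝ) 1, ∀ t ≥ (0:ℝ),
      deriv (fun s => z (x, s)) t = -ρ • deriv (fun y => z (y, t)) x)
    (hinit : ∀ x ∈ Set.Icc (0:ℝ) 1, z (x, 0) = 0)
    (Ω : ℕ → ℝ → Fin l → ℝ)
    (hΩ : ∀ k t i, Ω k t i = ∫ x in (0:ℝ)..1, z (x, t) i * shiftedLegendre k x) :
    ∀ T ≥ (0:ℝ),
      ρ * (∫ t in (0:ℝ)..T,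
          (z (0, t) ⬝ᵥ S.mulVec (z (0, t)) - z (1, t) ⬝ᵥ S.mulVec (z (1, t)))) -
        ∑ k ∈ range (N + 1), (2 * (k : ℝ) + 1) * (Ω k T ⬝ᵥ S.mulVec (Ω k T)) ≥ 0 := by
  intro T hT
  rw [ge_iff_le, ← sub_nonneg, sub_zero, sub_nonneg]
  rw [SLAux.energy ρ S hSsymm z hz hpde hinit T hT]
  have hpos : ∀ v : Fin l → ℝ, 0 ≤ v ⬝ᵥ S.mulVec v := by
    intro v
    by_cases hv : v = 0
    · subst hv; simp
    · exact (hSpd v hv).le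
  have hyi : ∀ i, Continuous fun x => z (x, T) i := fun i =>
    (continuous_apply i).comp (hz.continuous.comp (continuous_id.prodMk continuous_const))
  exact SLAux.bessel N S hSsymm hpos (fun x => z (x, T)) hyi (fun k => Ω k T)
    (fun k i => hΩ k T i)
end

section
/- Let ρ > 0, l ∈ ℕ, let R ∈ ℝ^{l×l} be symmetric, and let z : [0,1] × [0,∞) → ℝ^l be continuously differentiable, satisfy the transport equation z_t(x,t) = −ρ z_x(x,t) for all (x,t) ∈ [0,1] × [0,∞), and have zero initial condition z(x,0) = 0 for all x ∈ [0,1]. Then for every T ≥ 0: ∫₀¹ (1−x) z(x,T)ᵀ R z(x,T) dx = ρ ∫₀^T ( z(0,t)ᵀ R z(0,t) − ∫₀¹ z(x,t)ᵀ R z(x,t) dx ) dt. -/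
open Matrix MeasureTheory Set

/-- Weighted energy balance for the transport equation: if `z_t = −ρ z_x` on
`[0,1] × [0,∞)` with `z(·,0) = 0` and `R = Rᵀ`, then for every `T ≥ 0`,
`∫₀¹ (1−x) z(x,T)ᵀ R z(x,T) dx
   = ρ ∫₀^T ( z(0,t)ᵀ R z(0,t) − ∫₀¹ z(x,t)ᵀ R z(x,t) dx ) dt`. -/
theorem transport_weighted_energy_balance
    (ρ : ℝ) (hρ : 0 < ρ) (l : ℕ)
    (R : Matrix (Fin l) (Fin l) ℝ) (hR : R.IsSymm)
    (z : ℝ × ℝ → Fin l → ℝ)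
    (hz : ContDiff ℝ 1 z)
    (hpde : ∀ x ∈ Set.Icc (0:ℝ) 1, ∀ t ≥ (0:ℝ),
      deriv (fun s => z (x, s)) t = -ρ • deriv (fun y => z (y, t)) x)
    (hinit : ∀ x ∈ Set.Icc (0:ℝ) 1, z (x, 0) = 0) :
    ∀ T ≥ (0:ℝ),
      ∫ x in (0:ℝ)..1, (1 - x) * (z (x, T) ⬝ᵥ R.mulVec (z (x, T))) =
        ρ * ∫ t in (0:ℝ)..T,
          (z (0, t) ⬝ᵥ R.mulVec (z (0, t)) -
            ∫ x in (0:ℝ)..1, z (x, t) ⬝ᵥ R.mulVec (z (x, t))) := by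
  intro T hT
  set W : (Fin l → ℝ) → ℝ := fun u => u ⬝ᵥ R.mulVec u with hWdef
  have hW : ContDiff ℝ 1 W := by
    have : W = fun u => ∑ i, u i * ∑ j, R i j * u j := by
      funext u; simp [hWdef, dotProduct, Matrix.mulVec]
    rw [this]
    exact ContDiff.sum fun i _ =>
      ((ContinuousLinearMap.proj i : (Fin l → ℝ) →L[ℝ] ℝ).contDiff).mul
        (ContDiff.sum fun j _ => contDiff_const.mul
          (ContinuousLinearMap.proj j : (Fin l → ℝ) →L[ℝ] ℝ).contDiff)
  set w : ℝ × ℝ → ℝ := fun p => W (z p) with hwdef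
  have hw : ContDiff ℝ 1 w := hW.comp hz
  have hzd : Differentiable ℝ z := hz.differentiable one_ne_zero
  have hwd : Differentiable ℝ w := hw.differentiable one_ne_zero
  -- directional derivatives of z
  have hderiv_t : ∀ x t : ℝ, HasDerivAt (fun s => z (x, s)) (fderiv ℝ z (x, t) (0, 1)) t := by
    intro x t
    have hc : HasDerivAt (fun s : ℝ => ((x, s) : ℝ × ℝ)) ((0 : ℝ), (1 : ℝ)) t :=
      (hasDerivAt_const t x).prodMk (hasDerivAt_id t)
    exact (hzd (x, t)).hasFDerivAt.comp_hasDerivAt t hc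
  have hderiv_x : ∀ x t : ℝ, HasDerivAt (fun y => z (y, t)) (fderiv ℝ z (x, t) (1, 0)) x := by
    intro x t
    have hc : HasDerivAt (fun y : ℝ => ((y, t) : ℝ × ℝ)) ((1 : ℝ), (0 : ℝ)) x :=
      (hasDerivAt_id x).prodMk (hasDerivAt_const x t)
    exact (hzd (x, t)).hasFDerivAt.comp_hasDerivAt x hc
  have hzkey : ∀ x ∈ Set.Icc (0:ℝ) 1, ∀ t ≥ (0:ℝ),
      fderiv ℝ z (x, t) (0, 1) = -ρ • fderiv ℝ z (x, t) (1, 0) := by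
    intro x hx t ht
    rw [← (hderiv_t x t).deriv, ← (hderiv_x x t).deriv]
    exact hpde x hx t ht
  -- key PDE for w
  have hwkey : ∀ x ∈ Set.Icc (0:ℝ) 1, ∀ t ≥ (0:ℝ),
      fderiv ℝ w (x, t) (0, 1) = -ρ * fderiv ℝ w (x, t) (1, 0) := by
    intro x hx t ht
    have hcomp : fderiv ℝ w (x, t) = (fderiv ℝ W (z (x, t))).comp (fderiv ℝ z (x, t)) :=
      fderiv_comp (x, t) (hW.differentiable one_ne_zero _) (hzd _)
    rw [hcomp]
    simp only [ContinuousLinearMap.comp_apply, hzkey x hx t ht, _root_.map_smul]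
    simp [smul_eq_mul]
  -- the two fields
  set f : ℝ × ℝ → ℝ := fun p => ρ * (1 - p.1) * w p with hfdef
  set g : ℝ × ℝ → ℝ := fun p => (1 - p.1) * w p with hgdef
  set fst := ContinuousLinearMap.fst ℝ ℝ ℝ with hfst
  set f' : ℝ × ℝ → (ℝ × ℝ) →L[ℝ] ℝ :=
    fun p => (ρ * (1 - p.1)) • fderiv ℝ w p + w p • ((-ρ) • fst) with hf'def
  set g' : ℝ × ℝ → (ℝ × ℝ) →L[ℝ] ℝ :=
    fun p => (1 - p.1) • fderiv ℝ w p + w p • (-fst) with hg'def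
  have hcoef : ∀ p : ℝ × ℝ, HasFDerivAt (fun q : ℝ × ℝ => 1 - q.1) (-fst) p := by
    intro p
    have h1 : HasFDerivAt (fun q : ℝ × ℝ => q.1) fst p := hasFDerivAt_fst
    have := (hasFDerivAt_const (1:ℝ) p).fun_sub h1
    simpa [zero_sub] using this
  have hdf : ∀ p : ℝ × ℝ, HasFDerivAt f (f' p) p := by
    intro p
    have hc : HasFDerivAt (fun q : ℝ × ℝ => ρ * (1 - q.1)) ((-ρ) • fst) p := by
      have := (hcoef p).const_mul ρ
      simpa [smul_smul, neg_smul, smul_neg, ← neg_smul] using this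
    have := hc.fun_mul (hwd p).hasFDerivAt
    simpa [hf'def] using this
  have hdg : ∀ p : ℝ × ℝ, HasFDerivAt g (g' p) p := by
    intro p
    have := (hcoef p).fun_mul (hwd p).hasFDerivAt
    simpa [hg'def] using this
  have hdiv : ∀ x ∈ Set.Icc (0:ℝ) 1, ∀ t ≥ (0:ℝ),
      f' (x, t) (1, 0) + g' (x, t) (0, 1) = -ρ * w (x, t) := by
    intro x hx t ht
    simp only [hf'def, hg'def, ContinuousLinearMap.add_apply, ContinuousLinearMap.smul_apply,
      ContinuousLinearMap.neg_apply, hfst, ContinuousLinearMap.coe_fst', hwkey x hx t ht, smul_eq_mul]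
    ring
  have hwcont : Continuous w := hw.continuous
  have hrect : (Set.uIcc (0:ℝ) 1 ×ˢ Set.uIcc (0:ℝ) T) = Icc (0:ℝ) 1 ×ˢ Icc (0:ℝ) T := by
    rw [uIcc_of_le (by norm_num : (0:ℝ) ≤ 1), uIcc_of_le hT]
  have hIi : IntegrableOn (fun p => f' p (1, 0) + g' p (0, 1))
      (Set.uIcc (0:ℝ) 1 ×ˢ Set.uIcc (0:ℝ) T) := by
    rw [hrect]
    have hint : IntegrableOn (fun p => -ρ * w p) (Icc (0:ℝ) 1 ×ˢ Icc (0:ℝ) T) :=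
      (continuous_const.mul hwcont).continuousOn.integrableOn_compact (isCompact_Icc.prod isCompact_Icc)
    refine hint.congr_fun ?_ (measurableSet_Icc.prod measurableSet_Icc)
    rintro ⟨x, t⟩ ⟨hx, ht⟩
    exact ((hdiv x hx t ht.1).symm)
  have hgreen := integral2_divergence_prod_of_hasFDerivAt_off_countable f g f' g'
      0 0 1 T ∅ Set.countable_empty
      (by fun_prop) (by fun_prop)
      (fun p _ => hdf p) (fun p _ => hdg p) hIi
  -- simplify boundary terms
  have hb1 : (∫ t in (0:ℝ)..T, f (1, t)) = 0 := by
    simp [hfdef]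
  have hb2 : (∫ t in (0:ℝ)..T, f (0, t)) = ρ * ∫ t in (0:ℝ)..T, w (0, t) := by
    simp only [hfdef]
    rw [← intervalIntegral.integral_const_mul]
    norm_num
  have hb3 : (∫ x in (0:ℝ)..1, g (x, 0)) = 0 := by
    have h0 : Set.EqOn (fun x => g (x, 0)) (fun _ => (0:ℝ)) (Set.uIcc (0:ℝ) 1) := by
      intro x hx
      rw [uIcc_of_le (by norm_num : (0:ℝ) ≤ 1)] at hx
      have hz0 : z (x, 0) = 0 := hinit x hx
      simp [hgdef, hwdef, hz0, hWdef]
    rw [intervalIntegral.integral_congr h0, intervalIntegral.integral_zero]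
  -- rewrite LHS of Green's identity
  have hlhs : (∫ x in (0:ℝ)..1, ∫ t in (0:ℝ)..T, (f' (x, t) (1, 0) + g' (x, t) (0, 1)))
      = -ρ * ∫ x in (0:ℝ)..1, ∫ t in (0:ℝ)..T, w (x, t) := by
    rw [← intervalIntegral.integral_const_mul]
    apply intervalIntegral.integral_congr
    intro x hx
    dsimp only
    rw [uIcc_of_le (by norm_num : (0:ℝ) ≤ 1)] at hx
    rw [← intervalIntegral.integral_const_mul]
    apply intervalIntegral.integral_congr
    intro t ht
    dsimp only
    rw [uIcc_of_le hT] at ht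
    exact hdiv x hx t ht.1
  -- Fubini
  have hfub : (∫ x in (0:ℝ)..1, ∫ t in (0:ℝ)..T, w (x, t))
      = ∫ t in (0:ℝ)..T, ∫ x in (0:ℝ)..1, w (x, t) := by
    have h01 : (0:ℝ) ≤ 1 := by norm_num
    simp only [intervalIntegral.integral_of_le h01, intervalIntegral.integral_of_le hT]
    have hint : Integrable (Function.uncurry fun x t => w (x, t))
        ((volume.restrict (Ioc (0:ℝ) 1)).prod (volume.restrict (Ioc (0:ℝ) T))) := by
      rw [Measure.prod_restrict, ← Measure.volume_eq_prod]
      have : IntegrableOn w (Icc (0:ℝ) 1 ×ˢ Icc (0:ℝ) T) :=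
        hwcont.continuousOn.integrableOn_compact (isCompact_Icc.prod isCompact_Icc)
      exact (this.mono_set (Set.prod_mono Ioc_subset_Icc_self Ioc_subset_Icc_self))
    exact integral_integral_swap hint
  -- integrability for splitting the RHS
  have hcont0 : Continuous fun t => w (0, t) := hwcont.comp (by fun_prop)
  have hcontI : Continuous fun t => ∫ x in (0:ℝ)..1, w (x, t) := by
    apply intervalIntegral.continuous_parametric_intervalIntegral_of_continuous'
    exact hwcont.comp (continuous_swap)
  have hsplit : (∫ t in (0:ℝ)..T, (w (0, t) - ∫ x in (0:ℝ)..1, w (x, t)))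
      = (∫ t in (0:ℝ)..T, w (0, t)) - ∫ t in (0:ℝ)..T, ∫ x in (0:ℝ)..1, w (x, t) :=
    intervalIntegral.integral_sub (hcont0.intervalIntegrable 0 T)
      (hcontI.intervalIntegrable 0 T)
  -- assemble
  have hgoalL : (∫ x in (0:ℝ)..1, (1 - x) * (z (x, T) ⬝ᵥ R.mulVec (z (x, T))))
      = ∫ x in (0:ℝ)..1, g (x, T) := rfl
  rw [hgoalL]
  have hgoalR : (∫ t in (0:ℝ)..T,
      (z (0, t) ⬝ᵥ R.mulVec (z (0, t)) - ∫ x in (0:ℝ)..1, z (x, t) ⬝ᵥ R.mulVec (z (x, t))))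
      = (∫ t in (0:ℝ)..T, w (0, t)) - ∫ t in (0:ℝ)..T, ∫ x in (0:ℝ)..1, w (x, t) := hsplit
  rw [hgoalR]
  rw [hlhs, hb1, hb2, hb3, hfub] at hgreen
  linarith [hgreen]
end

section
/- (Finsler's lemma, strict form) Let Q ∈ ℝ^{n×n} be symmetric and K ∈ ℝ^{m×n}. If xᵀ Q x < 0 for every nonzero x ∈ ℝ^n with K x = 0, then there exists σ > 0 such that Q − σ Kᵀ K is negative definite, i.e., xᵀ(Q − σ KᵀK)x < 0 for all nonzero x ∈ ℝ^n. -/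
open Matrix

/-- **Finsler's lemma, strict form.** Let `Q` be symmetric and `K` a matrix.
If `xᵀ Q x < 0` for every nonzero `x` with `K x = 0`, then there exists
`σ > 0` such that `Q − σ Kᵀ K` is negative definite. -/
theorem finsler_lemma
    (n m : ℕ)
    (Q : Matrix (Fin n) (Fin n) ℝ) (hQ : Q.IsSymm)
    (K : Matrix (Fin m) (Fin n) ℝ)
    (h : ∀ x : Fin n → ℝ, x ≠ 0 → K.mulVec x = 0 → x ⬝ᵥ Q.mulVec x < 0) :
    ∃ σ : ℝ, 0 < σ ∧
      ∀ x : Fin n → ℝ, x ≠ 0 →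
        x ⬝ᵥ (Q - σ • (Kᵀ * K)).mulVec x < 0 := by
  by_contra hc
  push_neg at hc
  -- key identity
  have hA : ∀ x : Fin n → ℝ, x ⬝ᵥ (Kᵀ * K).mulVec x = (K.mulVec x) ⬝ᵥ (K.mulVec x) := by
    intro x; rw [← mulVec_mulVec, dotProduct_mulVec, vecMul_transpose]
  have hAnn : ∀ x : Fin n → ℝ, 0 ≤ x ⬝ᵥ (Kᵀ * K).mulVec x := by
    intro x; rw [hA]; exact Finset.sum_nonneg fun i _ => mul_self_nonneg _
  -- expand the quadratic form of a difference
  have hexp : ∀ (σ : ℝ) (x : Fin n → ℝ),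
      x ⬝ᵥ (Q - σ • (Kᵀ * K)).mulVec x
        = x ⬝ᵥ Q.mulVec x - σ * (x ⬝ᵥ (Kᵀ * K).mulVec x) := by
    intro σ x
    simp [sub_mulVec, dotProduct_sub, smul_mulVec, dotProduct_smul, smul_eq_mul]
  -- choose bad vectors and normalize
  choose y hy0 hy using fun k : ℕ => hc (k + 1) (by positivity)
  set u : ℕ → (Fin n → ℝ) := fun k => ‖y k‖⁻¹ • y k with hu
  have hun : ∀ k, ‖u k‖ = 1 := by
    intro k
    rw [hu]
    simp [norm_smul, norm_ne_zero_iff.mpr (hy0 k)]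
  have humem : ∀ k, u k ∈ Metric.sphere (0 : Fin n → ℝ) 1 := by
    intro k; simpa using hun k
  -- scaled inequality for u
  have hkey : ∀ k : ℕ, ((k : ℝ) + 1) * (u k ⬝ᵥ (Kᵀ * K).mulVec (u k))
      ≤ u k ⬝ᵥ Q.mulVec (u k) := by
    intro k
    have hy' := hy k
    rw [hexp] at hy'
    have c2 : (0 : ℝ) < ‖y k‖⁻¹ ^ 2 := by
      have := norm_pos_iff.mpr (hy0 k)
      positivity
    have hsc : ∀ (M : Matrix (Fin n) (Fin n) ℝ),
        u k ⬝ᵥ M.mulVec (u k) = ‖y k‖⁻¹ ^ 2 * (y k ⬝ᵥ M.mulVec (y k)) := by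
      intro M
      rw [hu]
      simp [mulVec_smul, dotProduct_smul, smul_dotProduct, smul_eq_mul]
      ring
    rw [hsc, hsc]
    nlinarith [hy']
  have hQnn : ∀ k, 0 ≤ u k ⬝ᵥ Q.mulVec (u k) := by
    intro k
    refine le_trans ?_ (hkey k)
    have := hAnn (u k)
    positivity
  -- compactness
  obtain ⟨z, hz, φ, hφ, hconv⟩ :=
    (isCompact_sphere (0 : Fin n → ℝ) 1).tendsto_subseq humem
  have hz1 : ‖z‖ = 1 := by simpa using hz
  have hz0 : z ≠ 0 := by
    intro hz0; rw [hz0, norm_zero] at hz1; exact one_ne_zero hz1.symm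
  -- continuity of quadratic forms
  have hcont : ∀ M : Matrix (Fin n) (Fin n) ℝ,
      Continuous fun x : Fin n → ℝ => x ⬝ᵥ M.mulVec x := by
    intro M
    simp only [dotProduct, mulVec]
    exact continuous_finset_sum _ fun i _ => (continuous_apply i).mul
      (continuous_finset_sum _ fun j _ => continuous_const.mul (continuous_apply j))
  have hQlim : Filter.Tendsto (fun k => u (φ k) ⬝ᵥ Q.mulVec (u (φ k)))
      Filter.atTop (nhds (z ⬝ᵥ Q.mulVec z)) :=
    ((hcont Q).tendsto z).comp hconv
  have hQz : 0 ≤ z ⬝ᵥ Q.mulVec z :=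
    ge_of_tendsto hQlim (Filter.Eventually.of_forall fun k => hQnn (φ k))
  -- bound on Q terms
  obtain ⟨M, hM⟩ := hQlim.bddAbove_range
  have hMb : ∀ k, u (φ k) ⬝ᵥ Q.mulVec (u (φ k)) ≤ M := fun k =>
    hM (Set.mem_range_self k)
  -- A-terms tend to 0 by squeeze
  have hAlim : Filter.Tendsto (fun k => u (φ k) ⬝ᵥ (Kᵀ * K).mulVec (u (φ k)))
      Filter.atTop (nhds 0) := by
    have hub : ∀ k, u (φ k) ⬝ᵥ (Kᵀ * K).mulVec (u (φ k)) ≤ M / ((φ k : ℝ) + 1) := by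
      intro k
      rw [le_div_iff₀ (by positivity)]
      calc u (φ k) ⬝ᵥ (Kᵀ * K).mulVec (u (φ k)) * ((φ k : ℝ) + 1)
          = ((φ k : ℝ) + 1) * (u (φ k) ⬝ᵥ (Kᵀ * K).mulVec (u (φ k))) := by ring
        _ ≤ u (φ k) ⬝ᵥ Q.mulVec (u (φ k)) := hkey (φ k)
        _ ≤ M := hMb k
    have hdiv : Filter.Tendsto (fun k => M / ((φ k : ℝ) + 1)) Filter.atTop (nhds 0) := by
      apply Filter.Tendsto.div_atTop tendsto_const_nhds
      have : Filter.Tendsto (fun k => (φ k : ℝ)) Filter.atTop Filter.atTop :=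
        tendsto_natCast_atTop_atTop.comp hφ.tendsto_atTop
      exact Filter.tendsto_atTop_add_const_right _ 1 this
    exact squeeze_zero (fun k => hAnn _) hub hdiv
  have hAz : z ⬝ᵥ (Kᵀ * K).mulVec z = 0 := by
    have := ((hcont (Kᵀ * K)).tendsto z).comp hconv
    exact tendsto_nhds_unique this hAlim
  have hKz : K.mulVec z = 0 := by
    rw [hA] at hAz
    exact dotProduct_self_eq_zero.mp hAz
  exact absurd (h z hz0 hKz) (not_lt.mpr hQz)
end

section
/- Let n, m ∈ ℕ, let A ∈ ℝ^{n×n} be symmetric negative definite, let B ∈ ℝ^{n×m}, let C ∈ ℝ^{m×m} be symmetric, and let Θ ∈ ℝ^{(n+m)×(n+m)} be symmetric. Then there exists γ₀ > 0 such that for all γ ≥ γ₀ the symmetric block matrix [[A, B], [Bᵀ, C − γ I_m]] + (1/γ) Θ is negative definite. -/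
open Matrix

private lemma amgm' (t a b : ℝ) (ht : 0 < t) : a*b ≤ t*a^2 + b^2/(4*t) := by
  rw [← sub_nonneg]
  have h : t*a^2 + b^2/(4*t) - a*b = (2*t*a - b)^2/(4*t) := by field_simp; ring
  rw [h]; positivity

private lemma dot_self_nonneg' {p : Type*} [Fintype p] (u : p → ℝ) : 0 ≤ u ⬝ᵥ u :=
  Finset.sum_nonneg fun _ _ => mul_self_nonneg _

private lemma bilin_bound {p q : Type*} [Fintype p] [Fintype q]
    (M : Matrix p q ℝ) :
    ∃ K : ℝ, 0 ≤ K ∧ ∀ ε : ℝ, 0 < ε → ∀ (u : p → ℝ) (v : q → ℝ),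
      u ⬝ᵥ M.mulVec v ≤ ε * (u ⬝ᵥ u) + K / ε * (v ⬝ᵥ v) := by
  set Q : ℝ := (Fintype.card q : ℝ) with hQ
  have hQ0 : (0:ℝ) ≤ Q := by positivity
  set S : ℝ := ∑ i, ∑ j, (M i j)^2 with hS
  have hS0 : 0 ≤ S := Finset.sum_nonneg fun i _ => Finset.sum_nonneg fun j _ => sq_nonneg _
  refine ⟨(Q+1) * S / 4, by positivity, ?_⟩
  intro ε hε u v
  have hq : (0:ℝ) < Q + 1 := by positivity
  have ht : (0:ℝ) < ε/(Q+1) := by positivity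
  have hvv : ∀ j, (v j)^2 ≤ v ⬝ᵥ v := by
    intro j
    have : v ⬝ᵥ v = ∑ j, (v j)^2 := by simp [dotProduct, sq]
    rw [this]
    exact Finset.single_le_sum (fun j _ => sq_nonneg (v j)) (Finset.mem_univ j)
  have e2 : ∑ i, ∑ j, (M i j)^2 * (v j)^2 ≤ S * (v ⬝ᵥ v) := by
    rw [hS, Finset.sum_mul]
    refine Finset.sum_le_sum fun i _ => ?_
    rw [Finset.sum_mul]
    exact Finset.sum_le_sum fun j _ => mul_le_mul_of_nonneg_left (hvv j) (sq_nonneg _)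
  have e1 : ∑ i, ∑ _j : q, (ε/(Q+1) * (u i)^2) = (ε/(Q+1)) * Q * (u ⬝ᵥ u) := by
    have h : ∀ i : p, ∑ _j : q, (ε/(Q+1) * (u i)^2) = Q * (ε/(Q+1) * (u i)^2) :=
      fun i => by simp [Finset.sum_const, Finset.card_univ, hQ]
    simp_rw [h, dotProduct, Finset.mul_sum]
    exact Finset.sum_congr rfl fun i _ => by ring
  calc u ⬝ᵥ M.mulVec v = ∑ i, ∑ j, u i * (M i j * v j) := by
        simp [dotProduct, Matrix.mulVec, Finset.mul_sum]
    _ ≤ ∑ i, ∑ j, (ε/(Q+1) * (u i)^2 + ((M i j * v j))^2/(4*(ε/(Q+1)))) :=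
        Finset.sum_le_sum fun i _ => Finset.sum_le_sum fun j _ => amgm' _ _ _ ht
    _ = (ε/(Q+1)) * Q * (u ⬝ᵥ u) + ((Q+1)/(4*ε)) * ∑ i, ∑ j, (M i j)^2 * (v j)^2 := by
        have p2 : ∀ (i : p) (j : q),
            ((M i j * v j))^2/(4*(ε/(Q+1))) = ((Q+1)/(4*ε)) * ((M i j)^2 * (v j)^2) := by
          intro i j
          field_simp
        simp_rw [p2]
        rw [← e1]
        simp only [Finset.sum_add_distrib]
        simp_rw [← Finset.mul_sum]
    _ ≤ ε * (u ⬝ᵥ u) + (Q+1) * S / 4 / ε * (v ⬝ᵥ v) := by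
        have h1 : (ε/(Q+1)) * Q * (u ⬝ᵥ u) ≤ ε * (u ⬝ᵥ u) := by
          have := dot_self_nonneg' u
          have hle : (ε/(Q+1)) * Q ≤ ε := by
            rw [div_mul_eq_mul_div, div_le_iff₀ hq]
            nlinarith
          nlinarith
        have h2 : ((Q+1)/(4*ε)) * ∑ i, ∑ j, (M i j)^2 * (v j)^2
            ≤ (Q+1) * S / 4 / ε * (v ⬝ᵥ v) := by
          have hc : (0:ℝ) ≤ (Q+1)/(4*ε) := by positivity
          calc ((Q+1)/(4*ε)) * ∑ i, ∑ j, (M i j)^2 * (v j)^2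
              ≤ ((Q+1)/(4*ε)) * (S * (v ⬝ᵥ v)) := mul_le_mul_of_nonneg_left e2 hc
            _ = (Q+1) * S / 4 / ε * (v ⬝ᵥ v) := by field_simp
        linarith

private lemma negdef_bound (n : ℕ) (A : Matrix (Fin n) (Fin n) ℝ)
    (hA : ∀ v : Fin n → ℝ, v ≠ 0 → v ⬝ᵥ A.mulVec v < 0) :
    ∃ α : ℝ, 0 < α ∧ ∀ u : Fin n → ℝ, u ⬝ᵥ A.mulVec u ≤ -α * (u ⬝ᵥ u) := by
  rcases Nat.eq_zero_or_pos n with h0 | hn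
  · refine ⟨1, one_pos, fun u => ?_⟩
    subst h0
    simp [dotProduct]
  · set f : (Fin n → ℝ) → ℝ := fun u => u ⬝ᵥ A.mulVec u with hf
    haveI : Nonempty (Fin n) := ⟨⟨0, hn⟩⟩
    have hn' : (0:ℝ) < n := by exact_mod_cast hn
    have hfc : Continuous f := by
      have hfeq : f = fun u => ∑ i, u i * ∑ j, A i j * u j := by
        funext u; simp [hf, dotProduct, Matrix.mulVec]
      rw [hfeq]
      exact continuous_finset_sum _ fun i _ => (continuous_apply i).mul
        (continuous_finset_sum _ fun j _ => continuous_const.mul (continuous_apply j))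
    have hsc : IsCompact (Metric.sphere (0 : Fin n → ℝ) 1) := isCompact_sphere _ _
    have hne : (Metric.sphere (0 : Fin n → ℝ) 1).Nonempty := by
      refine ⟨fun _ => (1:ℝ), ?_⟩
      rw [mem_sphere_iff_norm, sub_zero, pi_norm_const]
      simp
    obtain ⟨u₀, hu₀, hmax⟩ := hsc.exists_isMaxOn hne hfc.continuousOn
    have hu₀ne : u₀ ≠ 0 := by
      intro h
      rw [mem_sphere_iff_norm, h] at hu₀
      simp at hu₀
    have hfu₀ : f u₀ < 0 := hA u₀ hu₀ne
    refine ⟨-(f u₀) / n, div_pos (neg_pos.mpr hfu₀) hn', ?_⟩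
    intro u
    rcases eq_or_ne u 0 with rfl | hu
    · simp
    · have hnorm : 0 < ‖u‖ := norm_pos_iff.mpr hu
      set w : Fin n → ℝ := ‖u‖⁻¹ • u with hw
      have hwmem : w ∈ Metric.sphere (0 : Fin n → ℝ) 1 := by
        simp [hw, norm_smul, inv_mul_cancel₀ hnorm.ne']
      have hscale : f u = ‖u‖^2 * f w := by
        simp only [hf, hw, Matrix.mulVec_smul, smul_dotProduct, dotProduct_smul,
          smul_eq_mul]
        field_simp
      have hle : f w ≤ f u₀ := hmax hwmem
      have hdot : u ⬝ᵥ u ≤ n * ‖u‖^2 := by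
        have hterm : ∀ i, u i * u i ≤ ‖u‖^2 := by
          intro i
          have := norm_le_pi_norm u i
          have h2 : |u i| ≤ ‖u‖ := by simpa using this
          nlinarith [abs_nonneg (u i), norm_nonneg u, abs_mul_abs_self (u i)]
        calc u ⬝ᵥ u = ∑ i, u i * u i := rfl
          _ ≤ ∑ _i : Fin n, ‖u‖^2 := Finset.sum_le_sum fun i _ => hterm i
          _ = n * ‖u‖^2 := by simp [Finset.sum_const, Finset.card_univ]
      have h1 : f u ≤ ‖u‖^2 * f u₀ := by
        rw [hscale]
        nlinarith [sq_nonneg ‖u‖]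
      calc f u ≤ ‖u‖^2 * f u₀ := h1
        _ ≤ (u ⬝ᵥ u) / n * f u₀ := by
            have : (u ⬝ᵥ u) / n ≤ ‖u‖^2 := by
              rw [div_le_iff₀ hn']; nlinarith
            nlinarith
        _ = -(-(f u₀) / n) * (u ⬝ᵥ u) := by ring

/-- For `A` symmetric negative definite, `C`, `Θ` symmetric and any `B`, there
exists `γ₀ > 0` such that for all `γ ≥ γ₀` the block matrix
`[[A, B], [Bᵀ, C − γ I]] + (1/γ) Θ` is negative definite. -/
theorem block_negative_definite_large_gamma
    (n m : ℕ)
    (A : Matrix (Fin n) (Fin n) ℝ) (hAsymm : A.IsSymm)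
    (hAnd : ∀ v : Fin n → ℝ, v ≠ 0 → v ⬝ᵥ A.mulVec v < 0)
    (B : Matrix (Fin n) (Fin m) ℝ)
    (C : Matrix (Fin m) (Fin m) ℝ) (hCsymm : C.IsSymm)
    (Θ : Matrix (Fin n ⊕ Fin m) (Fin n ⊕ Fin m) ℝ) (hΘsymm : Θ.IsSymm) :
    ∃ γ₀ : ℝ, 0 < γ₀ ∧
      ∀ γ ≥ γ₀, ∀ x : Fin n ⊕ Fin m → ℝ, x ≠ 0 →
        x ⬝ᵥ (fromBlocks A B Bᵀ (C - γ • (1 : Matrix (Fin m) (Fin m) ℝ)) +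
            (1 / γ) • Θ).mulVec x < 0 := by
  obtain ⟨α, hα, hAb⟩ := negdef_bound n A hAnd
  obtain ⟨KB, hKB0, hKB⟩ := bilin_bound B
  obtain ⟨KC, hKC0, hKC⟩ := bilin_bound C
  obtain ⟨KT, hKT0, hKT⟩ := bilin_bound Θ
  set T : ℝ := 1 + KT with hT
  have hTpos : 0 < T := by positivity
  refine ⟨max (max 1 (4*T/α)) (16*KB/α + KC + T + 3), ?_, ?_⟩
  · exact lt_of_lt_of_le one_pos (le_trans (le_max_left _ _) (le_max_left _ _))
  intro γ hγ x hx
  have hγ1 : (1:ℝ) ≤ γ := le_trans (le_trans (le_max_left _ _) (le_max_left _ _)) hγ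
  have hγpos : (0:ℝ) < γ := lt_of_lt_of_le one_pos hγ1
  have hγ2 : 4*T/α ≤ γ := le_trans (le_trans (le_max_right _ _) (le_max_left _ _)) hγ
  have hγ3 : 16*KB/α + KC + T + 3 ≤ γ := le_trans (le_max_right _ _) hγ
  set u : Fin n → ℝ := x ∘ Sum.inl with hu
  set v : Fin m → ℝ := x ∘ Sum.inr with hv
  have hxe : Sum.elim u v = x := Sum.elim_comp_inl_inr x
  have expand : x ⬝ᵥ (fromBlocks A B Bᵀ (C - γ • (1 : Matrix (Fin m) (Fin m) ℝ)) +
        (1 / γ) • Θ).mulVec x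
      = u ⬝ᵥ A.mulVec u + u ⬝ᵥ B.mulVec v + v ⬝ᵥ Bᵀ.mulVec u + v ⬝ᵥ C.mulVec v
        - γ * (v ⬝ᵥ v) + (1/γ) * (x ⬝ᵥ Θ.mulVec x) := by
    conv_lhs => rw [← hxe]
    rw [add_mulVec, smul_mulVec, fromBlocks_mulVec]
    rw [sub_mulVec, smul_mulVec, one_mulVec]
    rw [dotProduct_add, dotProduct_smul, sumElim_dotProduct_sumElim, hxe]
    simp only [dotProduct_add, dotProduct_sub, dotProduct_smul, smul_eq_mul]
    ring
  have hsym : v ⬝ᵥ Bᵀ.mulVec u = u ⬝ᵥ B.mulVec v := by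
    rw [dotProduct_mulVec, vecMul_transpose, dotProduct_comm]
  have huu : 0 ≤ u ⬝ᵥ u := dot_self_nonneg' u
  have hvv : 0 ≤ v ⬝ᵥ v := dot_self_nonneg' v
  have hxx : x ⬝ᵥ x = u ⬝ᵥ u + v ⬝ᵥ v := by
    rw [← hxe, sumElim_dotProduct_sumElim]
  have hxxpos : 0 < x ⬝ᵥ x :=
    lt_of_le_of_ne (dot_self_nonneg' x) (Ne.symm fun h => hx (dotProduct_self_eq_zero.mp h))
  have huv : 0 < u ⬝ᵥ u + v ⬝ᵥ v := hxx ▸ hxxpos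
  -- bounds
  have bA := hAb u
  have bB : u ⬝ᵥ B.mulVec v ≤ α/8 * (u ⬝ᵥ u) + 8*KB/α * (v ⬝ᵥ v) := by
    have h := hKB (α/8) (by positivity) u v
    have he : KB / (α/8) = 8*KB/α := by field_simp
    rw [he] at h
    exact h
  have bC : v ⬝ᵥ C.mulVec v ≤ (1 + KC) * (v ⬝ᵥ v) := by
    have h := hKC 1 one_pos v v
    simp at h
    linarith
  have bT : x ⬝ᵥ Θ.mulVec x ≤ T * (x ⬝ᵥ x) := by
    have h := hKT 1 one_pos x x
    simp at h
    rw [hT]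
    linarith
  have hΘb : (1/γ) * (x ⬝ᵥ Θ.mulVec x) ≤ α/4 * (u ⬝ᵥ u) + T * (v ⬝ᵥ v) := by
    have h3 : T/γ ≤ α/4 := by
      rw [div_le_iff₀ hα] at hγ2
      rw [div_le_div_iff₀ hγpos (by norm_num)]
      nlinarith
    have h4 : T/γ ≤ T := div_le_self hTpos.le hγ1
    calc (1/γ) * (x ⬝ᵥ Θ.mulVec x) ≤ (1/γ) * (T * (x ⬝ᵥ x)) :=
          mul_le_mul_of_nonneg_left bT (by positivity)
      _ = (T/γ) * (u ⬝ᵥ u) + (T/γ) * (v ⬝ᵥ v) := by rw [hxx]; ring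
      _ ≤ α/4 * (u ⬝ᵥ u) + T * (v ⬝ᵥ v) :=
          add_le_add (mul_le_mul_of_nonneg_right h3 huu)
            (mul_le_mul_of_nonneg_right h4 hvv)
  rw [expand, hsym]
  have hγvv : (16*KB/α + KC + T + 3) * (v ⬝ᵥ v) ≤ γ * (v ⬝ᵥ v) :=
    mul_le_mul_of_nonneg_right hγ3 hvv
  have e : 8*KB/α*(v ⬝ᵥ v) + 8*KB/α*(v ⬝ᵥ v) = 16*KB/α*(v ⬝ᵥ v) := by ring
  rcases hvv.lt_or_eq with hvpos | hveq
  · linarith [mul_nonneg hα.le huu, e]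
  · have huupos : 0 < u ⬝ᵥ u := by rw [← hveq] at huv; linarith
    linarith [mul_pos hα huupos, e]
end

section
/- Let n_ξ, n ∈ ℕ, γ > 0, let P ∈ ℝ^{(n_ξ+n)×(n_ξ+n)} and Z ∈ ℝ^{n_ξ×n_ξ} be symmetric with P − diag(Z, 0_n) positive semidefinite, and let M be a symmetric matrix. Suppose ξ : [0,∞) → ℝ^{n_ξ} and X : [0,∞) → ℝ^n are continuously differentiable with ξ(0) = 0 and X(0) = 0, and ψ, y, d are continuous signals such that: (i) for all t ≥ 0, d/dt ( (ξ(t), X(t))ᵀ P (ξ(t), X(t)) ) + ψ(t)ᵀ M ψ(t) + (1/γ) ‖y(t)‖² − γ ‖d(t)‖² ≤ 0; and (ii) for all T ≥ 0, ∫₀^T ψ(t)ᵀ M ψ(t) dt + ξ(T)ᵀ Z ξ(T) ≥ 0 (finite-horizon IQC with terminal cost Z). Then for all T ≥ 0, ∫₀^T ‖y(t)‖² dt ≤ γ² ∫₀^T ‖d(t)‖² dt. -/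
open Matrix

/-- Dissipation plus finite-horizon IQC with terminal cost implies the
`L²`-gain bound `∫₀^T ‖y‖² dt ≤ γ² ∫₀^T ‖d‖² dt`. -/
theorem dissipation_IQC_implies_gain_bound
    (nξ n pψ p r : ℕ) (γ : ℝ) (hγ : 0 < γ)
    (P : Matrix (Fin nξ ⊕ Fin n) (Fin nξ ⊕ Fin n) ℝ) (hPsymm : P.IsSymm)
    (Z : Matrix (Fin nξ) (Fin nξ) ℝ) (hZsymm : Z.IsSymm)
    (hPZ : ∀ x : Fin nξ ⊕ Fin n → ℝ,
      0 ≤ x ⬝ᵥ (P - fromBlocks Z 0 0 (0 : Matrix (Fin n) (Fin n) ℝ)).mulVec x)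
    (M : Matrix (Fin pψ) (Fin pψ) ℝ) (hMsymm : M.IsSymm)
    (ξ : ℝ → Fin nξ → ℝ) (X : ℝ → Fin n → ℝ)
    (hξ : ContDiff ℝ 1 ξ) (hX : ContDiff ℝ 1 X)
    (hξ0 : ξ 0 = 0) (hX0 : X 0 = 0)
    (ψ : ℝ → Fin pψ → ℝ) (y : ℝ → Fin p → ℝ) (d : ℝ → Fin r → ℝ)
    (hψ : Continuous ψ) (hy : Continuous y) (hd : Continuous d)
    (hdissip : ∀ t ≥ (0:ℝ),
      deriv (fun s => Sum.elim (ξ s) (X s) ⬝ᵥ P.mulVec (Sum.elim (ξ s) (X s))) t +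
          ψ t ⬝ᵥ M.mulVec (ψ t) +
          (1 / γ) * ∑ i, (y t i) ^ 2 - γ * ∑ i, (d t i) ^ 2 ≤ 0)
    (hIQC : ∀ T ≥ (0:ℝ),
      (∫ t in (0:ℝ)..T, ψ t ⬝ᵥ M.mulVec (ψ t)) + ξ T ⬝ᵥ Z.mulVec (ξ T) ≥ 0) :
    ∀ T ≥ (0:ℝ),
      (∫ t in (0:ℝ)..T, ∑ i, (y t i) ^ 2) ≤
        γ ^ 2 * ∫ t in (0:ℝ)..T, ∑ i, (d t i) ^ 2 := by
  intro T hT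
  set v : ℝ → (Fin nξ ⊕ Fin n) → ℝ := fun s => Sum.elim (ξ s) (X s) with hv
  set g : ℝ → ℝ := fun s => v s ⬝ᵥ P.mulVec (v s) with hg
  -- coordinates of v are C¹
  have hvC : ∀ i, ContDiff ℝ 1 (fun s => v s i) := by
    intro i
    cases i with
    | inl a => exact contDiff_pi.mp hξ a
    | inr a => exact contDiff_pi.mp hX a
  have hgC : ContDiff ℝ 1 g := by
    have hge : g = fun s => ∑ i, v s i * ∑ j, P i j * v s j := by
      funext s; simp [hg, dotProduct, mulVec]
    rw [hge]
    exact ContDiff.sum fun i _ =>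
      (hvC i).mul (ContDiff.sum fun j _ => contDiff_const.mul (hvC j))
  have hgdiff : Differentiable ℝ g := hgC.differentiable one_ne_zero
  have hgderivC : Continuous (deriv g) := hgC.continuous_deriv le_rfl
  have hg0 : g 0 = 0 := by
    have hv0 : v 0 = 0 := by
      funext i; cases i <;> simp [hv, hξ0, hX0]
    simp [hg, hv0]
  -- continuity of the other terms
  have hcoord : ∀ i, Continuous fun t => ψ t i := fun i => (continuous_apply i).comp hψ
  have haC : Continuous fun t => ψ t ⬝ᵥ M.mulVec (ψ t) := by
    have : (fun t => ψ t ⬝ᵥ M.mulVec (ψ t)) =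
        fun t => ∑ i, ψ t i * ∑ j, M i j * ψ t j := by
      funext t; simp [dotProduct, mulVec]
    rw [this]
    exact continuous_finset_sum _ fun i _ =>
      (hcoord i).mul (continuous_finset_sum _ fun j _ => continuous_const.mul (hcoord j))
  have hbC : Continuous fun t => ∑ i, (y t i) ^ 2 :=
    continuous_finset_sum _ fun i _ => ((continuous_apply i).comp hy).pow 2
  have hcC : Continuous fun t => ∑ i, (d t i) ^ 2 :=
    continuous_finset_sum _ fun i _ => ((continuous_apply i).comp hd).pow 2
  -- FTC
  have hFTC : (∫ t in (0:ℝ)..T, deriv g t) = g T - g 0 :=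
    intervalIntegral.integral_deriv_eq_sub (fun x _ => hgdiff x)
      (hgderivC.intervalIntegrable 0 T)
  -- integral of the dissipation inequality
  have hInt1 : IntervalIntegrable (deriv g) MeasureTheory.volume 0 T :=
    hgderivC.intervalIntegrable 0 T
  have hInt2 : IntervalIntegrable (fun t => ψ t ⬝ᵥ M.mulVec (ψ t)) MeasureTheory.volume 0 T :=
    haC.intervalIntegrable 0 T
  have hInt3 : IntervalIntegrable (fun t => (1/γ) * ∑ i, (y t i) ^ 2) MeasureTheory.volume 0 T :=
    (continuous_const.mul hbC).intervalIntegrable 0 T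
  have hInt4 : IntervalIntegrable (fun t => γ * ∑ i, (d t i) ^ 2) MeasureTheory.volume 0 T :=
    (continuous_const.mul hcC).intervalIntegrable 0 T
  have key : (∫ t in (0:ℝ)..T,
      (deriv g t + ψ t ⬝ᵥ M.mulVec (ψ t) + (1/γ) * ∑ i, (y t i) ^ 2
        - γ * ∑ i, (d t i) ^ 2)) ≤ 0 := by
    have hnn : 0 ≤ ∫ t in (0:ℝ)..T,
        -(deriv g t + ψ t ⬝ᵥ M.mulVec (ψ t) + (1/γ) * ∑ i, (y t i) ^ 2
          - γ * ∑ i, (d t i) ^ 2) := by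
      apply intervalIntegral.integral_nonneg hT
      intro u hu
      have := hdissip u hu.1
      simp only [hg, hv] at this ⊢
      linarith
    rw [intervalIntegral.integral_neg] at hnn
    linarith
  rw [intervalIntegral.integral_sub ((hInt1.add hInt2).add hInt3) hInt4,
    intervalIntegral.integral_add (hInt1.add hInt2) hInt3,
    intervalIntegral.integral_add hInt1 hInt2, hFTC,
    intervalIntegral.integral_const_mul, intervalIntegral.integral_const_mul] at key
  -- quadratic form bound: g T ≥ ξ T ⬝ᵥ Z.mulVec (ξ T)
  have hquad : ξ T ⬝ᵥ Z.mulVec (ξ T) ≤ g T := by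
    have h := hPZ (v T)
    have hsplit : v T ⬝ᵥ (P - fromBlocks Z 0 0 (0 : Matrix (Fin n) (Fin n) ℝ)).mulVec (v T)
        = g T - ξ T ⬝ᵥ Z.mulVec (ξ T) := by
      rw [sub_mulVec, dotProduct_sub]
      congr 1
      simp [hv, fromBlocks_mulVec, dotProduct, mulVec, Fintype.sum_sum_type]
    rw [hsplit] at h
    linarith
  have hiqc := hIQC T hT
  set Ia := ∫ t in (0:ℝ)..T, ψ t ⬝ᵥ M.mulVec (ψ t) with hIa
  set Ib := ∫ t in (0:ℝ)..T, ∑ i, (y t i) ^ 2 with hIb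
  set Ic := ∫ t in (0:ℝ)..T, ∑ i, (d t i) ^ 2 with hIc
  -- key: gT - 0 + Ia + (1/γ)Ib - γ Ic ≤ 0 ; Ia + ξZξ ≥ 0 ; ξZξ ≤ gT
  have h1 : (1/γ) * Ib ≤ γ * Ic - Ia - g T := by rw [hg0] at key; linarith
  have h2 : 0 ≤ Ia + g T := by linarith
  have h3 : Ib = γ * ((1/γ) * Ib) := by field_simp
  calc Ib = γ * ((1/γ) * Ib) := h3
    _ ≤ γ * (γ * Ic - Ia - g T) := by
        exact mul_le_mul_of_nonneg_left h1 hγ.le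
    _ ≤ γ * (γ * Ic) := by nlinarith
    _ = γ ^ 2 * Ic := by ring
end
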